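/- (Breiman's lemma under dependence.) Let X be a real-valued random variable with distribution F ∈ ℛ_{−α} for some 0<α<∞, and let Θ be a non-negative random variable, non-degenerate at zero, with distribution G, such that Assumption A3' holds with function h, \bar G(cx) = o(P[ΘX>x]) as x→∞ for every constant c>0, and E[Θ^ρ h(Θ)] < ∞ for some ρ>α. Then P[ΘX>x] ~ E[Θ^α h(Θ)]·\bar F(x) as x→∞, and consequently the distribution H of ΘX belongs to ℛ_{−α}. -/

import Mathlib

open MeasureTheory ProbabilityTheory Filter Topology Set

noncomputable section

namespace RWS

variable {Ω : Type} [MeasurableSpace Ω]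

/-- The probability of an event, as a real number. -/
def pr (μ : Measure Ω) (s : Set Ω) : ℝ := (μ s).toReal

/-- The tail function `x ↦ P[X > x]` of a real-valued random variable `X`. -/
def tail (μ : Measure Ω) (X : Ω → ℝ) (x : ℝ) : ℝ := pr μ {ω | X ω > x}

/-- The support of (the distribution of) a real-valued random variable. -/
def supp (μ : Measure Ω) (Θ : Ω → ℝ) : Set ℝ :=
  {θ : ℝ | ∀ δ > 0, 0 < μ {ω | Θ ω ∈ Icc (θ - δ) (θ + δ)}}

/-- `Θ` is non-degenerate at zero. -/
def NonDegAtZero (μ : Measure Ω) (Θ : Ω → ℝ) : Prop := 0 < μ {ω | Θ ω ≠ 0}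

/-- `c` is the conditional probability of the event `A` given `Θ = θ`, defined as the limit
as `δ ↓ 0` of the probability of `A` conditioned on `Θ ∈ [θ-δ, θ+δ]`. -/
def IsCondProb (μ : Measure Ω) (Θ : Ω → ℝ) (A : Set Ω) (θ c : ℝ) : Prop :=
  Tendsto (fun δ : ℝ =>
      pr μ (A ∩ {ω | Θ ω ∈ Icc (θ - δ) (θ + δ)}) / pr μ {ω | Θ ω ∈ Icc (θ - δ) (θ + δ)})
    (nhdsWithin 0 (Ioi 0)) (nhds c)

/-- `c` is the conditional probability of `A` given `Θi = θi, Θj = θj`, defined as the limit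
as `δ ↓ 0` of the probability of `A` conditioned on `Θi ∈ [θi-δ, θi+δ], Θj ∈ [θj-δ, θj+δ]`. -/
def IsCondProb2 (μ : Measure Ω) (Θi Θj : Ω → ℝ) (A : Set Ω) (θi θj c : ℝ) : Prop :=
  Tendsto (fun δ : ℝ =>
      pr μ (A ∩ {ω | Θi ω ∈ Icc (θi - δ) (θi + δ) ∧ Θj ω ∈ Icc (θj - δ) (θj + δ)}) /
        pr μ {ω | Θi ω ∈ Icc (θi - δ) (θi + δ) ∧ Θj ω ∈ Icc (θj - δ) (θj + δ)})
    (nhdsWithin 0 (Ioi 0)) (nhds c)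

/-- The distribution of `X` under `μ` has a dominatedly varying tail (class `𝒟`). -/
def DomVar (μ : Measure Ω) (X : Ω → ℝ) : Prop :=
  ∀ b ∈ Ioo (0:ℝ) 1,
    IsBoundedUnder (· ≤ ·) atTop (fun x => tail μ X (b * x) / tail μ X x)

/-- The distribution of `X` under `μ` is long-tailed (class `ℒ`). -/
def LongTail (μ : Measure Ω) (X : Ω → ℝ) : Prop :=
  ∀ a > (0:ℝ), Tendsto (fun x => tail μ X (x - a) / tail μ X x) atTop (nhds 1)

/-- The distribution of `X` under `μ` is consistently varying (class `𝒞`). -/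
def ConsVar (μ : Measure Ω) (X : Ω → ℝ) : Prop :=
  Tendsto (fun v : ℝ => limsup (fun x => tail μ X (v * x) / tail μ X x) atTop)
    (nhdsWithin 1 (Iio 1)) (nhds 1)

/-- The distribution of `X` under `μ` is regularly varying with index `-α` (class `ℛ₋α`). -/
def RegVar (μ : Measure Ω) (X : Ω → ℝ) (α : ℝ) : Prop :=
  ∀ b > (0:ℝ), Tendsto (fun x => tail μ X (b * x) / tail μ X x) atTop (nhds (b ^ (-α)))

/-- The `L`-index `L_F = lim_{v↓1} liminf_{x→∞} F̄(vx)/F̄(x)` of the distribution of `X`. -/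
def Lindex (μ : Measure Ω) (X : Ω → ℝ) : ℝ :=
  limUnder (nhdsWithin 1 (Ioi 1))
    (fun v => liminf (fun x => tail μ X (v * x) / tail μ X x) atTop)

/-- `Xi` and `Xj` are tail asymptotically independent:
`P[|Xi| > xi | Xj > xj] → 0` as `xi ∧ xj → ∞`. -/
def TAIpair (μ : Measure Ω) (Xi Xj : Ω → ℝ) : Prop :=
  Tendsto (fun p : ℝ × ℝ =>
      pr μ {ω | |Xi ω| > p.1 ∧ Xj ω > p.2} / pr μ {ω | Xj ω > p.2})
    (atTop ×ˢ atTop) (nhds 0)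

/-- `Xi` and `Xj` are quasi-asymptotically independent. -/
def QAIpair (μ : Measure Ω) (Xi Xj : Ω → ℝ) : Prop :=
  Tendsto (fun x : ℝ =>
      pr μ {ω | max (Xi ω) 0 > x ∧ max (Xj ω) 0 > x} / (tail μ Xi x + tail μ Xj x))
    atTop (nhds 0) ∧
  Tendsto (fun x : ℝ =>
      pr μ {ω | max (-Xi ω) 0 > x ∧ Xj ω > x} / (tail μ Xi x + tail μ Xj x))
    atTop (nhds 0)

/-- The requirements on an auxiliary function `b` from Assumption A1:
`b > 0`, `b(x) → ∞` and `b(x)/x → 0`. -/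
def A1fun (b : ℝ → ℝ) : Prop :=
  (∀ x, 0 < b x) ∧ Tendsto b atTop atTop ∧ Tendsto (fun x => b x / x) atTop (nhds 0)

/-- The little-o condition of Assumption A1 for the ordered pair `(Xi, Θi), (Xj, Θj)`:
`P[Θi > bi(xi)] = o(P[Θi Xi > xi, Θj Xj > xj])` as `xi ∧ xj → ∞`. -/
def A1pair (μ : Measure Ω) (Xi Θi Xj Θj : Ω → ℝ) (bi : ℝ → ℝ) : Prop :=
  Tendsto (fun p : ℝ × ℝ =>
      pr μ {ω | Θi ω > bi p.1} /
        pr μ {ω | Θi ω * Xi ω > p.1 ∧ Θj ω * Xj ω > p.2})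
    (atTop ×ˢ atTop) (nhds 0)

/-- Assumption A2 for an ordered pair, with function `gij`:
`P[|Xi| > xi, Xj > xj | Θi = θi, Θj = θj] ~ gij(θi,θj) ⬝ P[|Xi| > xi, Xj > xj]`
as `xi ∧ xj → ∞`, uniformly over the supports. -/
def A2pair (μ : Measure Ω) (Xi Θi Xj Θj : Ω → ℝ) (gij : ℝ → ℝ → ℝ) : Prop :=
  Measurable (Function.uncurry gij) ∧
  (∀ θi θj : ℝ, 0 ≤ θi → 0 ≤ θj → 0 < gij θi θj) ∧
  ∃ cp : ℝ → ℝ → ℝ → ℝ → ℝ,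
    (∀ θi ∈ supp μ Θi, ∀ θj ∈ supp μ Θj, ∀ xi xj : ℝ,
      IsCondProb2 μ Θi Θj {ω | |Xi ω| > xi ∧ Xj ω > xj} θi θj (cp θi θj xi xj)) ∧
    TendstoUniformlyOn
      (fun (x : ℝ × ℝ) (θ : ℝ × ℝ) =>
        cp θ.1 θ.2 x.1 x.2 / (gij θ.1 θ.2 * pr μ {ω | |Xi ω| > x.1 ∧ Xj ω > x.2}))
      (fun _ => 1) (atTop ×ˢ atTop) (supp μ Θi ×ˢ supp μ Θj)

/-- Assumption A3 (A3') for a single pair `(X, Θ)` with function `h`: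
`P[X > x | Θ = θ] ~ h(θ) ⬝ P[X > x]` as `x → ∞`, uniformly over the support of `Θ`. -/
def A3' (μ : Measure Ω) (X Θ : Ω → ℝ) (h : ℝ → ℝ) : Prop :=
  (∀ θ : ℝ, 0 ≤ θ → 0 < h θ) ∧
  ∃ cp : ℝ → ℝ → ℝ,
    (∀ θ ∈ supp μ Θ, ∀ x : ℝ, IsCondProb μ Θ {ω | X ω > x} θ (cp θ x)) ∧
    TendstoUniformlyOn (fun (x : ℝ) (θ : ℝ) => cp θ x / (h θ * tail μ X x))
      (fun _ => 1) atTop (supp μ Θ)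

/-- The additional two-sided uniform asymptotic bounds of Assumption A4, for one ordered
pair, with constants `L ≤ U`:
`L gij(θi,θj) P[Xi > xi, Xj > xj] ≲ P[Xi > xi, Xj > xj | Θi = θi, Θj = θj]
   ≲ U gij(θi,θj) P[Xi > xi, Xj > xj]` as `xi ∧ xj → ∞`, uniformly over the supports. -/
def A4pair (μ : Measure Ω) (Xi Θi Xj Θj : Ω → ℝ) (gij : ℝ → ℝ → ℝ) (L U : ℝ) : Prop :=
  ∃ cp : ℝ → ℝ → ℝ → ℝ → ℝ,
    (∀ θi ∈ supp μ Θi, ∀ θj ∈ supp μ Θj, ∀ xi xj : ℝ,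
      IsCondProb2 μ Θi Θj {ω | Xi ω > xi ∧ Xj ω > xj} θi θj (cp θi θj xi xj)) ∧
    ∀ ε > (0:ℝ), ∀ᶠ x : ℝ × ℝ in atTop ×ˢ atTop,
      ∀ θi ∈ supp μ Θi, ∀ θj ∈ supp μ Θj,
        (1 - ε) * (L * (gij θi θj * pr μ {ω | Xi ω > x.1 ∧ Xj ω > x.2})) ≤
            cp θi θj x.1 x.2 ∧
          cp θi θj x.1 x.2 ≤
            (1 + ε) * (U * (gij θi θj * pr μ {ω | Xi ω > x.1 ∧ Xj ω > x.2}))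

/-- Assumption A1 for a finite family. -/
def A1 (μ : Measure Ω) {n : ℕ} (X Θ : Fin n → Ω → ℝ) (b : Fin n → ℝ → ℝ) : Prop :=
  (∀ i, A1fun (b i)) ∧
  ∀ i j, i ≠ j → A1pair μ (X i) (Θ i) (X j) (Θ j) (b i)

/-- Assumption A2 for a finite family. -/
def A2 (μ : Measure Ω) {n : ℕ} (X Θ : Fin n → Ω → ℝ)
    (g : Fin n → Fin n → ℝ → ℝ → ℝ) : Prop :=
  ∀ i j, i ≠ j → A2pair μ (X i) (Θ i) (X j) (Θ j) (g i j)

/-- Assumption A3 for a finite family. -/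
def A3 (μ : Measure Ω) {n : ℕ} (X Θ : Fin n → Ω → ℝ) (h : Fin n → ℝ → ℝ) : Prop :=
  ∀ i, A3' μ (X i) (Θ i) (h i)

/-- Assumption A4 for a finite family. -/
def A4 (μ : Measure Ω) {n : ℕ} (X Θ : Fin n → Ω → ℝ)
    (g : Fin n → Fin n → ℝ → ℝ → ℝ) : Prop :=
  A2 μ X Θ g ∧
  ∃ L U : ℝ, 0 < L ∧ L ≤ U ∧
    ∀ i j, i ≠ j → A4pair μ (X i) (Θ i) (X j) (Θ j) (g i j) L U

/-- Pairwise tail asymptotic independence of a finite family. -/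
def pTAI (μ : Measure Ω) {n : ℕ} (X : Fin n → Ω → ℝ) : Prop :=
  ∀ i j, i ≠ j → TAIpair μ (X i) (X j)

/-- Pairwise quasi-asymptotic independence of a finite family. -/
def pQAI (μ : Measure Ω) {n : ℕ} (X : Fin n → Ω → ℝ) : Prop :=
  ∀ i j, i ≠ j → QAIpair μ (X i) (X j)

/-- The randomly weighted and stopped sum `S_N^Θ`. -/
def SNsum (Θs Xs : ℕ → Ω → ℝ) (N : Ω → ℕ) (ω : Ω) : ℝ :=
  ∑ i ∈ Finset.range (N ω), Θs i ω * Xs i ω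

/-- The randomly stopped maximum of weighted sums `S_(N)^Θ` (equal to `0` when `N = 0`). -/
def SNmax (Θs Xs : ℕ → Ω → ℝ) (N : Ω → ℕ) (ω : Ω) : ℝ :=
  ⨆ k ∈ Finset.range (N ω), ∑ i ∈ Finset.range (k + 1), Θs i ω * Xs i ω

/-- The randomly stopped maximum of weighted summands `X_(N)^Θ` (equal to `0` when `N = 0`). -/
def XNmax (Θs Xs : ℕ → Ω → ℝ) (N : Ω → ℕ) (ω : Ω) : ℝ :=
  ⨆ i ∈ Finset.range (N ω), Θs i ω * Xs i ω



section BreimanAux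

variable {μ : Measure Ω} {X Θ : Ω → ℝ}

lemma pr_nonneg (μ : Measure Ω) (s : Set Ω) : 0 ≤ pr μ s := ENNReal.toReal_nonneg

lemma pr_mono [IsFiniteMeasure μ] {s t : Set Ω} (h : s ⊆ t) : pr μ s ≤ pr μ t :=
  ENNReal.toReal_mono (measure_ne_top μ t) (measure_mono h)

lemma pr_union_le [IsFiniteMeasure μ] (s t : Set Ω) : pr μ (s ∪ t) ≤ pr μ s + pr μ t := by
  refine le_trans (ENNReal.toReal_mono ?_ (measure_union_le s t)) ?_
  · exact ENNReal.add_ne_top.mpr ⟨measure_ne_top μ s, measure_ne_top μ t⟩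
  · rw [ENNReal.toReal_add (measure_ne_top μ s) (measure_ne_top μ t)]
    rfl

lemma tail_anti [IsFiniteMeasure μ] : Antitone (tail μ X) := fun a b hab =>
  pr_mono (fun ω (h : X ω > b) => lt_of_le_of_lt hab h)

lemma tail_nonneg (μ : Measure Ω) (X : Ω → ℝ) (x : ℝ) : 0 ≤ tail μ X x :=
  ENNReal.toReal_nonneg

lemma IsCondProb.nonneg {A : Set Ω} {θ c : ℝ} (h : IsCondProb μ Θ A θ c) : 0 ≤ c :=
  ge_of_tendsto h (Eventually.of_forall fun δ => div_nonneg (pr_nonneg μ _) (pr_nonneg μ _))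

lemma IsCondProb.le_one [IsFiniteMeasure μ] {A : Set Ω} {θ c : ℝ}
    (h : IsCondProb μ Θ A θ c) : c ≤ 1 := by
  refine le_of_tendsto h (Eventually.of_forall fun δ => ?_)
  rcases eq_or_lt_of_le (pr_nonneg μ {ω | Θ ω ∈ Icc (θ - δ) (θ + δ)}) with hz | hz
  · rw [← hz, div_zero]; norm_num
  · exact div_le_one_of_le₀ (pr_mono inter_subset_right) hz.le

lemma supp_subset_Ici (hΘnn : ∀ ω, 0 ≤ Θ ω) : supp μ Θ ⊆ Ici (0:ℝ) := by
  intro θ hθ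
  by_contra hneg
  simp only [mem_Ici, not_le] at hneg
  have h1 := hθ (-θ/2) (by linarith)
  have : {ω | Θ ω ∈ Icc (θ - -θ/2) (θ + -θ/2)} = ∅ := by
    ext ω
    simp only [mem_setOf_eq, mem_Icc, mem_empty_iff_false, iff_false, not_and, not_le]
    intro _
    have := hΘnn ω
    linarith
  rw [this] at h1
  simp at h1

lemma ae_mem_supp (hΘm : Measurable Θ) : ∀ᵐ ω ∂μ, Θ ω ∈ supp μ Θ := by
  set U : Set ℝ := ⋃ (p : ℚ × ℚ) (_ : μ (Θ ⁻¹' (Icc (p.1 : ℝ) (p.2 : ℝ))) = 0),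
    Icc (p.1 : ℝ) (p.2 : ℝ) with hU
  have hUnull : μ (Θ ⁻¹' U) = 0 := by
    rw [hU, preimage_iUnion]
    refine measure_iUnion_null fun p => ?_
    rw [preimage_iUnion]
    exact measure_iUnion_null fun hp => hp
  have hsub : {ω | Θ ω ∉ supp μ Θ} ⊆ Θ ⁻¹' U := by
    intro ω hω
    simp only [mem_setOf_eq, supp, not_forall] at hω
    obtain ⟨δ, hδ, hz⟩ := hω
    push_neg at hz
    have hz' : μ {ω' | Θ ω' ∈ Icc (Θ ω - δ) (Θ ω + δ)} = 0 := le_antisymm hz (by simp)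
    obtain ⟨q1, hq1, hq1'⟩ := exists_rat_btwn (show Θ ω - δ < Θ ω by linarith)
    obtain ⟨q2, hq2, hq2'⟩ := exists_rat_btwn (show Θ ω < Θ ω + δ by linarith)
    have hnull : μ (Θ ⁻¹' (Icc (q1 : ℝ) (q2 : ℝ))) = 0 := by
      refine measure_mono_null ?_ hz'
      intro ω' hω'
      simp only [mem_preimage, mem_Icc] at hω'
      exact ⟨by linarith [hω'.1], by linarith [hω'.2]⟩
    simp only [mem_preimage, hU, mem_iUnion]
    exact ⟨(q1, q2), hnull, ⟨hq1'.le, hq2.le⟩⟩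
  exact measure_mono_null hsub hUnull

lemma condProb_eq_rnDeriv [IsFiniteMeasure μ] (hΘm : Measurable Θ) {A : Set Ω}
    (hA : MeasurableSet A) :
    ∀ᵐ θ ∂(μ.map Θ), ∀ c, IsCondProb μ Θ A θ c →
      c = (((μ.restrict A).map Θ).rnDeriv (μ.map Θ) θ).toReal := by
  filter_upwards [Besicovitch.ae_tendsto_rnDeriv ((μ.restrict A).map Θ) (μ.map Θ),
    Measure.rnDeriv_lt_top ((μ.restrict A).map Θ) (μ.map Θ)] with θ hten hlt c hc
  have key : Tendsto (fun δ : ℝ =>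
      pr μ (A ∩ {ω | Θ ω ∈ Icc (θ - δ) (θ + δ)}) / pr μ {ω | Θ ω ∈ Icc (θ - δ) (θ + δ)})
      (nhdsWithin 0 (Ioi 0))
      (nhds ((((μ.restrict A).map Θ).rnDeriv (μ.map Θ) θ).toReal)) := by
    have h2 := (ENNReal.tendsto_toReal hlt.ne).comp hten
    refine Tendsto.congr (fun δ => ?_) h2
    show (((μ.restrict A).map Θ) (Metric.closedBall θ δ) / (μ.map Θ) (Metric.closedBall θ δ)).toReal
        = _
    rw [ENNReal.toReal_div]
    have hIcc : Θ ⁻¹' (Metric.closedBall θ δ) = {ω | Θ ω ∈ Icc (θ - δ) (θ + δ)} := by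
      ext ω; simp [Real.closedBall_eq_Icc]
    congr 1
    · rw [Measure.map_apply hΘm measurableSet_closedBall,
        Measure.restrict_apply (hΘm measurableSet_closedBall), hIcc, inter_comm]
      rfl
    · rw [Measure.map_apply hΘm measurableSet_closedBall, hIcc]
      rfl
  exact tendsto_nhds_unique hc key

lemma pr_inter_eq_setIntegral [IsFiniteMeasure μ] (hΘm : Measurable Θ) {A : Set Ω}
    (hA : MeasurableSet A) {S : Set ℝ} (hS : MeasurableSet S) :
    pr μ (A ∩ Θ ⁻¹' S)
      = ∫ θ in S, (((μ.restrict A).map Θ).rnDeriv (μ.map Θ) θ).toReal ∂(μ.map Θ) := by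
  have hac : (μ.restrict A).map Θ ≪ μ.map Θ := by
    refine Measure.AbsolutelyContinuous.mk fun s hs h0 => ?_
    rw [Measure.map_apply hΘm hs] at h0 ⊢
    rw [Measure.restrict_apply (hΘm hs)]
    exact measure_mono_null inter_subset_left h0
  rw [Measure.setIntegral_toReal_rnDeriv hac S, measureReal_def, Measure.map_apply hΘm hS,
    Measure.restrict_apply (hΘm hS)]
  unfold pr
  rw [inter_comm]

end BreimanAux


section BreimanAux2

variable {μ : Measure Ω} {X Θ : Ω → ℝ} {h : ℝ → ℝ} {ρ : ℝ}

lemma measurable_rpow_comp (hΘm : Measurable Θ) (hΘnn : ∀ ω, 0 ≤ Θ ω) {c : ℝ} (hc : c ≠ 0) :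
    Measurable fun ω => Θ ω ^ c := by
  have heq : (fun ω => Θ ω ^ c)
      = fun ω => if Θ ω = 0 then (0:ℝ) else Real.exp (Real.log (Θ ω) * c) := by
    funext ω
    rcases eq_or_lt_of_le (hΘnn ω) with h0 | h0
    · rw [← h0]
      simp [Real.zero_rpow hc]
    · rw [if_neg h0.ne', Real.rpow_def_of_pos h0]
  rw [heq]
  exact Measurable.ite (hΘm (measurableSet_singleton 0)) measurable_const
    ((Real.measurable_log.comp hΘm).mul_const c).exp

lemma aesm_pow (hΘm : Measurable Θ) (hΘnn : ∀ ω, 0 ≤ Θ ω) (hρ0 : 0 < ρ)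
    (hmomA : AEStronglyMeasurable (fun ω => Θ ω ^ ρ * h (Θ ω)) μ) {β : ℝ} (hβ : β ≠ 0) :
    AEStronglyMeasurable (fun ω => Θ ω ^ β * h (Θ ω)) μ := by
  have heq : (fun ω => Θ ω ^ β * h (Θ ω))
      = fun ω => Θ ω ^ (β - ρ) * (Θ ω ^ ρ * h (Θ ω)) := by
    funext ω
    rcases eq_or_lt_of_le (hΘnn ω) with h0 | h0
    · simp [← h0, Real.zero_rpow hβ, Real.zero_rpow hρ0.ne']
    · rw [← mul_assoc, ← Real.rpow_add h0, sub_add_cancel]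
  rw [heq]
  rcases eq_or_ne β ρ with hβρ | hβρ
  · subst hβρ
    simpa only [sub_self, Real.rpow_zero, one_mul] using hmomA
  · exact (measurable_rpow_comp hΘm hΘnn (sub_ne_zero.mpr hβρ)).aestronglyMeasurable.mul hmomA

lemma aesm_h (hΘm : Measurable Θ) (hΘnn : ∀ ω, 0 ≤ Θ ω) (hρ0 : 0 < ρ)
    (hmomA : AEStronglyMeasurable (fun ω => Θ ω ^ ρ * h (Θ ω)) μ) :
    AEStronglyMeasurable (fun ω => h (Θ ω)) μ := by
  have heq : (fun ω => h (Θ ω))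
      = fun ω => (Θ ⁻¹' {0}).indicator (fun _ => h 0) ω
          + Θ ω ^ (-ρ) * (Θ ω ^ ρ * h (Θ ω)) := by
    funext ω
    rcases eq_or_lt_of_le (hΘnn ω) with h0 | h0
    · rw [indicator_of_mem (by simpa using h0.symm), ← h0, Real.zero_rpow hρ0.ne',
        zero_mul, mul_zero, add_zero]
    · rw [indicator_of_notMem (by simpa using h0.ne'), ← mul_assoc,
        ← Real.rpow_add h0, neg_add_cancel, Real.rpow_zero, one_mul, zero_add]
  rw [heq]
  exact ((measurable_const.indicator (hΘm (measurableSet_singleton 0))).aestronglyMeasurable).add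
    ((measurable_rpow_comp hΘm hΘnn (neg_ne_zero.mpr hρ0.ne')).aestronglyMeasurable.mul hmomA)

lemma h_bdd [IsProbabilityMeasure μ] (hΘnn : ∀ ω, 0 ≤ Θ ω)
    (hF : ∀ x : ℝ, 0 ≤ x → 0 < tail μ X x) (hA3 : A3' μ X Θ h) :
    ∃ B : ℝ, 0 < B ∧ ∀ θ ∈ supp μ Θ, h θ ≤ B := by
  obtain ⟨hpos, cp, hcp, hunif⟩ := hA3
  rw [Metric.tendstoUniformlyOn_iff] at hunif
  obtain ⟨y0, hy0⟩ := eventually_atTop.mp (hunif (1/2) (by norm_num))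
  set y := max y0 0 with hy
  have hFy : 0 < tail μ X y := hF y (le_max_right _ _)
  refine ⟨2 / tail μ X y, div_pos two_pos hFy, fun θ hθ => ?_⟩
  have hd : 0 < h θ * tail μ X y := mul_pos (hpos θ (supp_subset_Ici hΘnn hθ)) hFy
  have hdist := hy0 y (le_max_left _ _) θ hθ
  rw [Real.dist_eq, abs_lt] at hdist
  have hcp1 : cp θ y ≤ 1 := (hcp θ hθ y).le_one
  have hv : 1/2 < cp θ y / (h θ * tail μ X y) := by linarith [hdist.1, hdist.2]
  rw [lt_div_iff₀ hd] at hv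
  rw [le_div_iff₀ hFy]
  nlinarith

lemma integrable_h [IsProbabilityMeasure μ] (hΘm : Measurable Θ) (hΘnn : ∀ ω, 0 ≤ Θ ω)
    (hF : ∀ x : ℝ, 0 ≤ x → 0 < tail μ X x) (hA3 : A3' μ X Θ h) (hρ0 : 0 < ρ)
    (hmomA : AEStronglyMeasurable (fun ω => Θ ω ^ ρ * h (Θ ω)) μ) :
    Integrable (fun ω => h (Θ ω)) μ := by
  obtain ⟨B, hB, hBle⟩ := h_bdd hΘnn hF hA3
  refine Integrable.mono' (integrable_const B) (aesm_h hΘm hΘnn hρ0 hmomA) ?_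
  filter_upwards [ae_mem_supp hΘm] with ω hω
  rw [Real.norm_eq_abs, abs_of_nonneg (hA3.1 _ (hΘnn ω)).le]
  exact hBle _ hω

lemma integrable_pow [IsProbabilityMeasure μ] (hΘm : Measurable Θ) (hΘnn : ∀ ω, 0 ≤ Θ ω)
    (hF : ∀ x : ℝ, 0 ≤ x → 0 < tail μ X x) (hA3 : A3' μ X Θ h) (hρ0 : 0 < ρ)
    (hmom : Integrable (fun ω => Θ ω ^ ρ * h (Θ ω)) μ) {β : ℝ} (hβ0 : 0 < β) (hβρ : β ≤ ρ) :
    Integrable (fun ω => Θ ω ^ β * h (Θ ω)) μ := by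
  refine ((integrable_h hΘm hΘnn hF hA3 hρ0 hmom.1).add hmom).mono'
    (aesm_pow hΘm hΘnn hρ0 hmom.1 hβ0.ne') (Eventually.of_forall fun ω => ?_)
  have hh : 0 ≤ h (Θ ω) := (hA3.1 _ (hΘnn ω)).le
  have hβnn : 0 ≤ Θ ω ^ β := Real.rpow_nonneg (hΘnn ω) β
  have hρnn : 0 ≤ Θ ω ^ ρ := Real.rpow_nonneg (hΘnn ω) ρ
  rw [Real.norm_eq_abs, abs_of_nonneg (mul_nonneg hβnn hh)]
  simp only [Pi.add_apply]
  rcases le_total (Θ ω) 1 with h1 | h1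
  · have hle : Θ ω ^ β ≤ 1 := Real.rpow_le_one (hΘnn ω) h1 hβ0.le
    nlinarith
  · have hle : Θ ω ^ β ≤ Θ ω ^ ρ := Real.rpow_le_rpow_of_exponent_le h1 hβρ
    nlinarith

end BreimanAux2


section BreimanAux3

variable {μ : Measure Ω} {X Θ : Ω → ℝ} {h : ℝ → ℝ}

lemma key_estimate [IsProbabilityMeasure μ] (hXm : Measurable X) (hΘm : Measurable Θ)
    (hΘnn : ∀ ω, 0 ≤ Θ ω) (hF : ∀ x : ℝ, 0 ≤ x → 0 < tail μ X x) (hA3 : A3' μ X Θ h)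
    (hI : Integrable (fun ω => h (Θ ω)) μ) {ε : ℝ} (hε : 0 < ε) :
    ∃ x0 : ℝ, 1 ≤ x0 ∧ ∀ y, x0 ≤ y → ∀ S : Set ℝ, MeasurableSet S →
      (1 - ε) * ((∫ ω in Θ ⁻¹' S, h (Θ ω) ∂μ) * tail μ X y)
          ≤ pr μ ({ω | X ω > y} ∩ Θ ⁻¹' S) ∧
        pr μ ({ω | X ω > y} ∩ Θ ⁻¹' S)
          ≤ (1 + ε) * ((∫ ω in Θ ⁻¹' S, h (Θ ω) ∂μ) * tail μ X y) := by
  obtain ⟨hpos, cp, hcp, hunif⟩ := hA3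
  rw [Metric.tendstoUniformlyOn_iff] at hunif
  obtain ⟨x0', hx0'⟩ := eventually_atTop.mp (hunif ε hε)
  refine ⟨max x0' 1, le_max_right _ _, fun y hy S hS => ?_⟩
  have hy0 : (0:ℝ) ≤ y := le_trans (le_trans zero_le_one (le_max_right x0' 1)) hy
  have hFy : 0 < tail μ X y := hF y hy0
  have hA : MeasurableSet {ω | X ω > y} := measurableSet_lt measurable_const hXm
  set f : ℝ → ℝ := fun θ => (((μ.restrict {ω | X ω > y}).map Θ).rnDeriv (μ.map Θ) θ).toReal
    with hfdef
  have hfm : Measurable f := (Measure.measurable_rnDeriv _ _).ennreal_toReal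
  have hfG : Integrable f (μ.map Θ) := Measure.integrable_toReal_rnDeriv
  have hfΘ : Integrable (fun ω => f (Θ ω)) μ :=
    (integrable_map_measure hfm.aestronglyMeasurable hΘm.aemeasurable).mp hfG
  have heq : pr μ ({ω | X ω > y} ∩ Θ ⁻¹' S) = ∫ ω in Θ ⁻¹' S, f (Θ ω) ∂μ := by
    rw [pr_inter_eq_setIntegral hΘm hA hS,
      setIntegral_map hS hfm.aestronglyMeasurable hΘm.aemeasurable]
  have hae : ∀ᵐ ω ∂μ, (1 - ε) * (h (Θ ω) * tail μ X y) ≤ f (Θ ω)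
      ∧ f (Θ ω) ≤ (1 + ε) * (h (Θ ω) * tail μ X y) := by
    have h2 := ae_of_ae_map hΘm.aemeasurable (condProb_eq_rnDeriv (μ := μ) hΘm hA)
    filter_upwards [h2, ae_mem_supp hΘm] with ω huniq hsupp
    have hcf : cp (Θ ω) y = f (Θ ω) := huniq _ (hcp (Θ ω) hsupp y)
    have hd : 0 < h (Θ ω) * tail μ X y := mul_pos (hpos _ (hΘnn ω)) hFy
    have hdist := hx0' y (le_trans (le_max_left _ _) hy) (Θ ω) hsupp
    rw [Real.dist_eq, abs_lt] at hdist
    have hveq : cp (Θ ω) y = cp (Θ ω) y / (h (Θ ω) * tail μ X y) * (h (Θ ω) * tail μ X y) :=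
      (div_mul_cancel₀ _ hd.ne').symm
    rw [← hcf]
    constructor
    · rw [hveq]; exact mul_le_mul_of_nonneg_right (by linarith [hdist.1, hdist.2]) hd.le
    · rw [hveq]; exact mul_le_mul_of_nonneg_right (by linarith [hdist.1, hdist.2]) hd.le
  have hIlow : Integrable (fun ω => (1 - ε) * (h (Θ ω) * tail μ X y)) μ :=
    (hI.mul_const _).const_mul _
  have hIhigh : Integrable (fun ω => (1 + ε) * (h (Θ ω) * tail μ X y)) μ :=
    (hI.mul_const _).const_mul _
  have hconst : ∀ c : ℝ, ∫ ω in Θ ⁻¹' S, c * (h (Θ ω) * tail μ X y) ∂μ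
      = c * ((∫ ω in Θ ⁻¹' S, h (Θ ω) ∂μ) * tail μ X y) := by
    intro c
    rw [MeasureTheory.integral_const_mul, MeasureTheory.integral_mul_const]
  constructor
  · rw [heq, ← hconst]
    exact setIntegral_mono_ae hIlow.integrableOn hfΘ.integrableOn
      (hae.mono fun ω hω => hω.1)
  · rw [heq, ← hconst]
    exact setIntegral_mono_ae hfΘ.integrableOn hIhigh.integrableOn
      (hae.mono fun ω hω => hω.2)

end BreimanAux3



section BreimanAux4

variable {μ : Measure Ω} {X : Ω → ℝ}

/-- Potter-type upper bound derived from regular variation at `b = 1/2`. -/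
lemma potter [IsProbabilityMeasure μ] (hF : ∀ x : ℝ, 0 ≤ x → 0 < tail μ X x)
    {α ρ : ℝ} (hα : 0 < α) (hαρ : α < ρ) (hR : RegVar μ X α) :
    ∃ x1 : ℝ, 1 ≤ x1 ∧ ∀ x s : ℝ, 1 ≤ s → 2 * (x1 * s) ≤ x →
      tail μ X (x / s) ≤ (2 * s) ^ ρ * tail μ X x := by
  have h2 := hR (1/2) (by norm_num)
  have h12 : ((1:ℝ)/2) ^ (-α) = (2:ℝ) ^ α := by
    rw [Real.rpow_neg (by norm_num), Real.div_rpow zero_le_one (by norm_num : (0:ℝ) ≤ 2),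
      Real.one_rpow, one_div, inv_inv]
  have hlim : ((1:ℝ)/2) ^ (-α) < (2:ℝ) ^ ρ := by
    rw [h12]
    exact (Real.rpow_lt_rpow_left_iff one_lt_two).mpr hαρ
  obtain ⟨x1', hx1'⟩ := eventually_atTop.mp
    ((h2.eventually (eventually_lt_nhds hlim)).and (eventually_ge_atTop (0:ℝ)))
  set x1 : ℝ := max x1' 1 with hx1def
  have hstep : ∀ x : ℝ, x1 ≤ x → tail μ X (x / 2) ≤ (2:ℝ) ^ ρ * tail μ X x := by
    intro x hx
    have hx' := hx1' x (le_trans (le_max_left _ _) hx)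
    have hFx : 0 < tail μ X x := hF x hx'.2
    have := (div_lt_iff₀ hFx).mp hx'.1
    calc tail μ X (x / 2) = tail μ X (1 / 2 * x) := by ring_nf
      _ ≤ (2:ℝ) ^ ρ * tail μ X x := this.le
  have claim : ∀ k : ℕ, ∀ x : ℝ, x1 * 2 ^ k ≤ x →
      tail μ X (x / 2 ^ k) ≤ ((2:ℝ) ^ k) ^ ρ * tail μ X x := by
    intro k
    induction k with
    | zero => intro x _; simp [Real.one_rpow]
    | succ k ih =>
      intro x hx
      have h2k : (0:ℝ) < 2 ^ k := by positivity
      have hx2 : x1 * 2 ^ k ≤ x / 2 := by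
        rw [le_div_iff₀ two_pos]
        calc x1 * 2 ^ k * 2 = x1 * 2 ^ (k + 1) := by ring
          _ ≤ x := hx
      have hx1le : x1 ≤ x := by
        have h1 : (1:ℝ) ≤ 2 ^ (k+1) := one_le_pow₀ one_le_two
        have hx1pos : (0:ℝ) < x1 := lt_of_lt_of_le zero_lt_one (le_max_right _ _)
        nlinarith
      have h1 := ih (x / 2) hx2
      have h2' := hstep x hx1le
      have hrw : x / 2 ^ (k + 1) = x / 2 / 2 ^ k := by
        rw [div_div]; ring_nf
      rw [hrw]
      calc tail μ X (x / 2 / 2 ^ k) ≤ ((2:ℝ) ^ k) ^ ρ * tail μ X (x / 2) := h1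
        _ ≤ ((2:ℝ) ^ k) ^ ρ * ((2:ℝ) ^ ρ * tail μ X x) :=
            mul_le_mul_of_nonneg_left h2' (Real.rpow_nonneg h2k.le ρ)
        _ = ((2:ℝ) ^ (k+1)) ^ ρ * tail μ X x := by
            rw [← mul_assoc, ← Real.mul_rpow h2k.le (by norm_num : (0:ℝ) ≤ 2), ← pow_succ]
  refine ⟨x1, le_max_right _ _, fun x s hs hxs => ?_⟩
  have hx1pos : (0:ℝ) < x1 := lt_of_lt_of_le zero_lt_one (le_max_right _ _)
  have hspos : (0:ℝ) < s := lt_of_lt_of_le zero_lt_one hs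
  have hxpos : (0:ℝ) < x := lt_of_lt_of_le (by nlinarith) hxs
  set n : ℕ := ⌊s⌋₊ with hn
  have hn1 : 1 ≤ n := Nat.le_floor (by exact_mod_cast hs)
  set k : ℕ := Nat.log 2 n with hk
  have h2k : ((2:ℝ) ^ k) ≤ s := by
    have h1 : 2 ^ k ≤ n := Nat.pow_log_le_self 2 (by omega)
    have h2 : (n:ℝ) ≤ s := Nat.floor_le hspos.le
    calc ((2:ℝ) ^ k) = ((2 ^ k : ℕ) : ℝ) := by push_cast; ring
      _ ≤ (n:ℝ) := by exact_mod_cast h1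
      _ ≤ s := h2
  have hs2 : s ≤ 2 ^ (k + 1) := by
    have h1 : s < n + 1 := Nat.lt_floor_add_one s
    have h2 : n < 2 ^ (k + 1) := Nat.lt_pow_succ_log_self one_lt_two n
    have h2' : (n:ℝ) + 1 ≤ ((2:ℝ) ^ (k+1)) := by
      have : (n + 1 : ℕ) ≤ 2 ^ (k+1) := h2
      calc (n:ℝ) + 1 = ((n + 1 : ℕ) : ℝ) := by push_cast; ring
        _ ≤ (((2:ℕ) ^ (k+1) : ℕ) : ℝ) := by exact_mod_cast this
        _ = (2:ℝ) ^ (k+1) := by push_cast; ring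
    linarith
  have hcond : x1 * 2 ^ (k + 1) ≤ x := by
    have h1 : (2:ℝ) ^ (k+1) = 2 * 2 ^ k := by ring
    nlinarith
  have hmain := claim (k + 1) x hcond
  have h2k1pos : (0:ℝ) < 2 ^ (k+1) := by positivity
  calc tail μ X (x / s) ≤ tail μ X (x / 2 ^ (k + 1)) := by
        exact tail_anti ((div_le_div_iff_of_pos_left hxpos h2k1pos hspos).mpr hs2)
    _ ≤ ((2:ℝ) ^ (k+1)) ^ ρ * tail μ X x := hmain
    _ ≤ (2 * s) ^ ρ * tail μ X x := by
        refine mul_le_mul_of_nonneg_right ?_ (tail_nonneg μ X x)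
        refine Real.rpow_le_rpow h2k1pos.le ?_ (le_of_lt (lt_trans hα hαρ))
        calc ((2:ℝ) ^ (k+1)) = 2 * 2 ^ k := by ring
          _ ≤ 2 * s := by linarith

end BreimanAux4


section BreimanAux5

variable {μ : Measure Ω} {X Θ : Ω → ℝ} {h : ℝ → ℝ}

lemma pairwise_disjoint_Ioc_of_monotone {t : ℕ → ℝ} (hmono : Monotone t) :
    ∀ j k : ℕ, j ≠ k → Disjoint (Ioc (t j) (t (j+1))) (Ioc (t k) (t (k+1))) := by
  have key : ∀ j k : ℕ, j < k → Disjoint (Ioc (t j) (t (j+1))) (Ioc (t k) (t (k+1))) := by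
    intro j k hjk
    rw [Set.Ioc_disjoint_Ioc]
    exact le_trans (min_le_left _ _) (le_trans (hmono hjk) (le_max_right _ _))
  intro j k hjk
  rcases lt_or_gt_of_ne hjk with hl | hl
  · exact key j k hl
  · exact (key k j hl).symm

lemma biUnion_Ioc_of_monotone {t : ℕ → ℝ} (hmono : Monotone t) (n : ℕ) :
    ⋃ k ∈ Finset.range n, Ioc (t k) (t (k+1)) = Ioc (t 0) (t n) := by
  induction n with
  | zero => simp
  | succ n ih =>
    rw [Finset.range_add_one, Finset.set_biUnion_insert, ih, Set.union_comm,
      Set.Ioc_union_Ioc_eq_Ioc (hmono (Nat.zero_le n)) (hmono (Nat.le_succ n))]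

lemma pr_biUnion [IsFiniteMeasure μ] {n : ℕ} {B : ℕ → Set Ω} (hm : ∀ k, MeasurableSet (B k))
    (hd : ∀ j k, j ≠ k → Disjoint (B j) (B k)) :
    pr μ (⋃ k ∈ Finset.range n, B k) = ∑ k ∈ Finset.range n, pr μ (B k) := by
  unfold pr
  rw [measure_biUnion_finset (fun j _ k _ hjk => hd j k hjk) (fun k _ => hm k),
    ENNReal.toReal_sum (fun k _ => measure_ne_top μ _)]

lemma one_div_rpow_neg {t : ℝ} (ht : 0 < t) (α : ℝ) : ((1:ℝ)/t) ^ (-α) = t ^ α := by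
  rw [Real.rpow_neg (by positivity), Real.div_rpow zero_le_one ht.le,
    Real.one_rpow, one_div, inv_inv]

lemma tendsto_setIntegral_Ioc (hΘm : Measurable Θ)
    {g : Ω → ℝ} (hg : Integrable g μ) (hg0 : ∀ ω, Θ ω = 0 → g ω = 0) {r : ℝ} (hr : 1 < r)
    (hΘnn : ∀ ω, 0 ≤ Θ ω) :
    Tendsto (fun m : ℕ => ∫ ω in {ω | Θ ω ∈ Ioc (r ^ (-(m:ℝ))) (r ^ (m:ℝ))}, g ω ∂μ)
      atTop (𝓝 (∫ ω, g ω ∂μ)) := by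
  have hrpos : 0 < r := lt_trans zero_lt_one hr
  have hmeas : ∀ m : ℕ, MeasurableSet {ω | Θ ω ∈ Ioc (r ^ (-(m:ℝ))) (r ^ (m:ℝ))} :=
    fun m => hΘm measurableSet_Ioc
  have hrw : ∀ m : ℕ, (∫ ω in {ω | Θ ω ∈ Ioc (r ^ (-(m:ℝ))) (r ^ (m:ℝ))}, g ω ∂μ)
      = ∫ ω, ({ω | Θ ω ∈ Ioc (r ^ (-(m:ℝ))) (r ^ (m:ℝ))}).indicator g ω ∂μ :=
    fun m => (integral_indicator (hmeas m)).symm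
  simp only [hrw]
  refine tendsto_integral_of_dominated_convergence (fun ω => ‖g ω‖)
    (fun m => hg.1.indicator (hmeas m)) hg.norm ?_ ?_
  · exact fun m => Eventually.of_forall fun ω => norm_indicator_le_norm_self g ω
  · refine Eventually.of_forall fun ω => ?_
    rcases eq_or_lt_of_le (hΘnn ω) with h0 | h0
    · have hz : g ω = 0 := hg0 ω h0.symm
      have heq : ∀ m : ℕ, ({ω | Θ ω ∈ Ioc (r ^ (-(m:ℝ))) (r ^ (m:ℝ))}).indicator g ω = g ω := by
        intro m
        rcases em (ω ∈ {ω | Θ ω ∈ Ioc (r ^ (-(m:ℝ))) (r ^ (m:ℝ))}) with hm | hm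
        · exact indicator_of_mem hm g
        · rw [indicator_of_notMem hm, hz]
      exact Tendsto.congr (fun m => (heq m).symm) tendsto_const_nhds
    · have hpow : Tendsto (fun m : ℕ => r ^ (m:ℝ)) atTop atTop := by
        have := tendsto_pow_atTop_atTop_of_one_lt hr
        refine this.congr fun m => ?_
        rw [Real.rpow_natCast]
      have hev : ∀ᶠ m : ℕ in atTop,
          ({ω | Θ ω ∈ Ioc (r ^ (-(m:ℝ))) (r ^ (m:ℝ))}).indicator g ω = g ω := by
        filter_upwards [hpow.eventually_ge_atTop (Θ ω), hpow.eventually_ge_atTop (1/Θ ω * r)]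
          with m h1 h2
        refine indicator_of_mem ?_ g
        constructor
        · have hrm : (0:ℝ) < r ^ (m:ℝ) := Real.rpow_pos_of_pos hrpos _
          have hinv : (Θ ω)⁻¹ < r ^ (m:ℝ) := by
            have h3 : (1:ℝ)/Θ ω < 1/Θ ω * r := by nlinarith [one_div_pos.mpr h0]
            rw [inv_eq_one_div]
            linarith
          have hm1 : 1 < Θ ω * r ^ (m:ℝ) := by
            have := mul_lt_mul_of_pos_left hinv h0
            rwa [mul_inv_cancel₀ h0.ne'] at this
          rw [Real.rpow_neg hrpos.le, inv_eq_one_div, div_lt_iff₀ hrm]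
          linarith
        · exact h1
      exact Tendsto.congr' (hev.mono fun m hm => hm.symm) tendsto_const_nhds

lemma tendsto_setIntegral_gt (hΘm : Measurable Θ)
    {g : Ω → ℝ} (hg : Integrable g μ) {r : ℝ} (hr : 1 < r) :
    Tendsto (fun m : ℕ => ∫ ω in {ω | Θ ω > r ^ (m:ℝ)}, g ω ∂μ) atTop (𝓝 0) := by
  have hmeas : ∀ m : ℕ, MeasurableSet {ω | Θ ω > r ^ (m:ℝ)} :=
    fun m => measurableSet_lt measurable_const hΘm
  have hrw : ∀ m : ℕ, (∫ ω in {ω | Θ ω > r ^ (m:ℝ)}, g ω ∂μ)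
      = ∫ ω, ({ω | Θ ω > r ^ (m:ℝ)}).indicator g ω ∂μ :=
    fun m => (integral_indicator (hmeas m)).symm
  simp only [hrw]
  have h0 : (0:ℝ) = ∫ ω, (0:ℝ) ∂μ := by simp
  rw [h0]
  refine tendsto_integral_of_dominated_convergence (fun ω => ‖g ω‖)
    (fun m => hg.1.indicator (hmeas m)) hg.norm ?_ ?_
  · exact fun m => Eventually.of_forall fun ω => norm_indicator_le_norm_self g ω
  · refine Eventually.of_forall fun ω => ?_
    have hpow : Tendsto (fun m : ℕ => r ^ (m:ℝ)) atTop atTop := by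
      have := tendsto_pow_atTop_atTop_of_one_lt hr
      refine this.congr fun m => ?_
      rw [Real.rpow_natCast]
    have hev : ∀ᶠ m : ℕ in atTop, ({ω | Θ ω > r ^ (m:ℝ)}).indicator g ω = 0 := by
      filter_upwards [hpow.eventually_ge_atTop (Θ ω)] with m h1
      exact indicator_of_notMem (by simpa using h1) g
    exact Tendsto.congr' (hev.mono fun m hm => hm.symm) tendsto_const_nhds

end BreimanAux5


section BreimanAux6

variable {μ : Measure Ω} {X Θ : Ω → ℝ} {h : ℝ → ℝ}

lemma low_bound [IsProbabilityMeasure μ] (hXm : Measurable X) (hΘm : Measurable Θ)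
    (hΘnn : ∀ ω, 0 ≤ Θ ω) (hF : ∀ x : ℝ, 0 ≤ x → 0 < tail μ X x)
    {α ρ : ℝ} (hα : 0 < α) (hαρ : α < ρ) (hR : RegVar μ X α) (hA3 : A3' μ X Θ h)
    (hmom : Integrable (fun ω => Θ ω ^ ρ * h (Θ ω)) μ)
    (hC : 0 < ∫ ω, Θ ω ^ α * h (Θ ω) ∂μ)
    {ε : ℝ} (hε : 0 < ε) (hε1 : ε ≤ 1) :
    ∀ᶠ x in atTop, (1 - ε) * ((∫ ω, Θ ω ^ α * h (Θ ω) ∂μ) * tail μ X x)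
      ≤ tail μ (fun ω => Θ ω * X ω) x := by
  have hρ0 : 0 < ρ := lt_trans hα hαρ
  have hint_h := integrable_h hΘm hΘnn hF hA3 hρ0 hmom.1
  have hint_α := integrable_pow hΘm hΘnn hF hA3 hρ0 hmom hα hαρ.le
  set C := ∫ ω, Θ ω ^ α * h (Θ ω) ∂μ with hCdef
  set e := ε/20 with hedef
  have he0 : 0 < e := by positivity
  have he1 : e ≤ 1/20 := by rw [hedef]; linarith
  obtain ⟨x0, hx01, hbound⟩ := key_estimate hXm hΘm hΘnn hF hA3 hint_h he0
  set r : ℝ := (1 - e) ^ (-(1/α)) with hrdef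
  have h1e : 0 < 1 - e := by linarith
  have h1e1 : 1 - e < 1 := by linarith
  have hr1 : 1 < r := by
    rw [hrdef]
    refine (Real.one_lt_rpow_iff_of_pos h1e).mpr (Or.inr ⟨h1e1, ?_⟩)
    rw [neg_lt, neg_zero]
    positivity
  have hrpos : 0 < r := lt_trans zero_lt_one hr1
  have hrinv : r ^ (-α) = 1 - e := by
    rw [hrdef, ← Real.rpow_mul h1e.le, show -(1/α) * -α = 1 by field_simp, Real.rpow_one]
  have hrα : r ^ α * (1 - e) = 1 := by
    rw [← hrinv, ← Real.rpow_add hrpos, add_neg_cancel, Real.rpow_zero]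
  -- choose m
  have hg0 : ∀ ω, Θ ω = 0 → Θ ω ^ α * h (Θ ω) = 0 := fun ω h0 => by
    rw [h0, Real.zero_rpow hα.ne', zero_mul]
  have htend := tendsto_setIntegral_Ioc hΘm hint_α hg0 hr1 hΘnn
  obtain ⟨m, hm⟩ := (htend.eventually
    (eventually_gt_nhds (show (1 - e) * C < C by nlinarith))).exists
  set n := 2 * m with hndef
  set t : ℕ → ℝ := fun k => r ^ ((k:ℝ) - (m:ℝ)) with htdef
  have htpos : ∀ k, 0 < t k := fun k => Real.rpow_pos_of_pos hrpos _
  have htmono : Monotone t := fun j k hjk => by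
    rw [htdef]
    exact Real.rpow_le_rpow_left_iff hr1 |>.mpr (by
      have : (j:ℝ) ≤ (k:ℝ) := by exact_mod_cast hjk
      linarith)
  have htsucc : ∀ k, t (k+1) = r * t k := fun k => by
    rw [htdef]
    push_cast
    rw [show ((k:ℝ) + 1 - m) = 1 + ((k:ℝ) - m) by ring, Real.rpow_add hrpos, Real.rpow_one]
  have ht0 : t 0 = r ^ (-(m:ℝ)) := by rw [htdef]; norm_num
  have htn : t n = r ^ ((m:ℝ)) := by
    rw [htdef, hndef]
    push_cast
    ring_nf
  -- rewrite hm in terms of the grid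
  have hmU : (1 - e) * C < ∫ ω in Θ ⁻¹' (Ioc (t 0) (t n)), Θ ω ^ α * h (Θ ω) ∂μ := by
    rw [ht0, htn]
    exact hm
  -- eventual facts
  have hev1 : ∀ᶠ x in atTop, ∀ k ∈ Finset.range n,
      (1 - e) * t k ^ α * tail μ X x ≤ tail μ X (x / t k) := by
    rw [eventually_all_finset]
    intro k _
    have hb : (0:ℝ) < 1 / t k := by positivity
    have heq : ((1:ℝ)/t k) ^ (-α) = t k ^ α := one_div_rpow_neg (htpos k) α
    have hlt : (1 - e) * t k ^ α < ((1:ℝ)/t k) ^ (-α) := by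
      rw [heq]
      nlinarith [Real.rpow_pos_of_pos (htpos k) α]
    filter_upwards [(hR (1/t k) hb).eventually (eventually_ge_nhds hlt),
      eventually_ge_atTop (0:ℝ)] with x hx hx0
    rcases eq_or_lt_of_le (tail_nonneg μ X x) with h0 | h0
    · rw [← h0, mul_zero]
      exact tail_nonneg μ X _
    · have h2 := (le_div_iff₀ h0).mp hx
      rwa [one_div_mul_eq_div] at h2
  filter_upwards [hev1, eventually_ge_atTop (x0 * t n), eventually_gt_atTop (0:ℝ)]
    with x h1 h2 h3
  -- cell-wise estimate
  set Acell : ℕ → ℝ := fun k => ∫ ω in Θ ⁻¹' (Ioc (t k) (t (k+1))), h (Θ ω) ∂μ with hAcell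
  set Icell : ℕ → ℝ := fun k => ∫ ω in Θ ⁻¹' (Ioc (t k) (t (k+1))), Θ ω ^ α * h (Θ ω) ∂μ
    with hIcell
  have hAnn : ∀ k, 0 ≤ Acell k := fun k =>
    setIntegral_nonneg (hΘm measurableSet_Ioc) (fun ω _ => (hA3.1 _ (hΘnn ω)).le)
  have hcell : ∀ k ∈ Finset.range n,
      (1 - e) * (1 - e) * (1 - e) * Icell k * tail μ X x
        ≤ pr μ ({ω | Θ ω * X ω > x} ∩ Θ ⁻¹' (Ioc (t k) (t (k+1)))) := by
    intro k hk
    have hxk : x0 ≤ x / t k := by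
      rw [le_div_iff₀ (htpos k)]
      have hkn : t k ≤ t n := htmono (Finset.mem_range.mp hk).le
      have hx0pos : (0:ℝ) < x0 := lt_of_lt_of_le zero_lt_one hx01
      nlinarith
    have hincl : {ω | X ω > x / t k} ∩ Θ ⁻¹' (Ioc (t k) (t (k+1)))
        ⊆ {ω | Θ ω * X ω > x} ∩ Θ ⁻¹' (Ioc (t k) (t (k+1))) := by
      rintro ω ⟨hXω, hΘS⟩
      refine ⟨?_, hΘS⟩
      simp only [mem_preimage, mem_Ioc] at hΘS
      simp only [mem_setOf_eq] at hXω ⊢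
      have hxt : 0 < x / t k := div_pos h3 (htpos k)
      have := mul_lt_mul'' hΘS.1 hXω (htpos k).le hxt.le
      calc x = t k * (x / t k) := by
            rw [mul_div_assoc', mul_comm, mul_div_assoc, div_self (htpos k).ne', mul_one]
        _ < Θ ω * X ω := this
    -- step 1: Icell vs Acell
    have hstep1 : (1 - e) * Icell k ≤ t k ^ α * Acell k := by
      have hmono2 : ∫ ω in Θ ⁻¹' (Ioc (t k) (t (k+1))), (1 - e) * (Θ ω ^ α * h (Θ ω)) ∂μ
          ≤ ∫ ω in Θ ⁻¹' (Ioc (t k) (t (k+1))), t k ^ α * h (Θ ω) ∂μ := by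
        refine setIntegral_mono_on ((hint_α.const_mul _).integrableOn)
          ((hint_h.const_mul _).integrableOn) (hΘm measurableSet_Ioc) ?_
        intro ω hω
        simp only [mem_preimage, mem_Ioc] at hω
        have hθpos : 0 < Θ ω := lt_trans (htpos k) hω.1
        have hθle : Θ ω ^ α ≤ (r * t k) ^ α := by
          refine Real.rpow_le_rpow hθpos.le ?_ hα.le
          rw [← htsucc k]
          exact hω.2
        have hh : 0 ≤ h (Θ ω) := (hA3.1 _ (hΘnn ω)).le
        have hexp : (r * t k) ^ α = r ^ α * t k ^ α :=
          Real.mul_rpow hrpos.le (htpos k).le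
        rw [← mul_assoc]
        calc (1 - e) * Θ ω ^ α * h (Θ ω) ≤ (1 - e) * (r ^ α * t k ^ α) * h (Θ ω) := by
              rw [hexp] at hθle
              have := mul_le_mul_of_nonneg_left hθle (by linarith : (0:ℝ) ≤ 1 - e)
              exact mul_le_mul_of_nonneg_right this hh
          _ = t k ^ α * h (Θ ω) := by
              rw [show (1 - e) * (r ^ α * t k ^ α) = (r ^ α * (1 - e)) * t k ^ α by ring, hrα,
                one_mul]
      rw [hIcell, hAcell, ← MeasureTheory.integral_const_mul, ← MeasureTheory.integral_const_mul]
      exact hmono2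
    -- step 2: key estimate + regvar
    have hkey := (hbound (x / t k) hxk (Ioc (t k) (t (k+1))) measurableSet_Ioc).1
    have hreg := h1 k hk
    have htail : 0 ≤ tail μ X x := tail_nonneg μ X x
    have htkα : 0 < t k ^ α := Real.rpow_pos_of_pos (htpos k) α
    calc (1 - e) * (1 - e) * (1 - e) * Icell k * tail μ X x
        = (1 - e) * (((1 - e) * Icell k) * ((1 - e) * tail μ X x)) := by ring
      _ ≤ (1 - e) * ((t k ^ α * Acell k) * ((1 - e) * tail μ X x)) := by
          have hIcnn : 0 ≤ (1 - e) * tail μ X x := by positivity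
          have := mul_le_mul_of_nonneg_right hstep1 hIcnn
          exact mul_le_mul_of_nonneg_left this h1e.le
      _ = (1 - e) * (Acell k * ((1 - e) * t k ^ α * tail μ X x)) := by ring
      _ ≤ (1 - e) * (Acell k * tail μ X (x / t k)) := by
          have := mul_le_mul_of_nonneg_left hreg (hAnn k)
          exact mul_le_mul_of_nonneg_left this h1e.le
      _ ≤ pr μ ({ω | X ω > x / t k} ∩ Θ ⁻¹' (Ioc (t k) (t (k+1)))) := hkey
      _ ≤ pr μ ({ω | Θ ω * X ω > x} ∩ Θ ⁻¹' (Ioc (t k) (t (k+1)))) := pr_mono hincl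
  -- sum over cells
  have hEmeas : MeasurableSet {ω | Θ ω * X ω > x} :=
    measurableSet_lt measurable_const (hΘm.mul hXm)
  have hsum : ∑ k ∈ Finset.range n, pr μ ({ω | Θ ω * X ω > x} ∩ Θ ⁻¹' (Ioc (t k) (t (k+1))))
      ≤ tail μ (fun ω => Θ ω * X ω) x := by
    rw [← pr_biUnion (fun k => hEmeas.inter (hΘm measurableSet_Ioc))
      (fun j k hjk => ((pairwise_disjoint_Ioc_of_monotone htmono j k hjk).preimage Θ).mono
        inf_le_right inf_le_right)]
    exact pr_mono (iUnion₂_subset fun k _ => inter_subset_left)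
  -- sum of Icell
  have hIsum : ∫ ω in Θ ⁻¹' (Ioc (t 0) (t n)), Θ ω ^ α * h (Θ ω) ∂μ
      = ∑ k ∈ Finset.range n, Icell k := by
    rw [← biUnion_Ioc_of_monotone htmono n]
    rw [show Θ ⁻¹' (⋃ k ∈ Finset.range n, Ioc (t k) (t (k+1)))
        = ⋃ k ∈ Finset.range n, Θ ⁻¹' (Ioc (t k) (t (k+1))) by simp [preimage_iUnion]]
    exact integral_biUnion_finset (Finset.range n)
      (fun k _ => hΘm measurableSet_Ioc)
      (fun j hj k hk hjk => ((pairwise_disjoint_Ioc_of_monotone htmono j k hjk).preimage Θ))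
      (fun k _ => hint_α.integrableOn)
  -- conclude
  have hfinal : (1 - e) * (1 - e) * (1 - e) * ((1 - e) * C) * tail μ X x
      ≤ tail μ (fun ω => Θ ω * X ω) x := by
    have hsum2 : ∑ k ∈ Finset.range n,
        (1 - e) * (1 - e) * (1 - e) * Icell k * tail μ X x
        ≤ tail μ (fun ω => Θ ω * X ω) x :=
      le_trans (Finset.sum_le_sum hcell) hsum
    have hfactor : ∑ k ∈ Finset.range n,
        (1 - e) * (1 - e) * (1 - e) * Icell k * tail μ X x
        = (1 - e) * (1 - e) * (1 - e) * (∑ k ∈ Finset.range n, Icell k) * tail μ X x := by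
      rw [← Finset.sum_mul, ← Finset.mul_sum]
    rw [hfactor] at hsum2
    refine le_trans ?_ hsum2
    rw [← hIsum]
    have htail : 0 ≤ tail μ X x := tail_nonneg μ X x
    have h3e : (0:ℝ) ≤ (1 - e) * (1 - e) * (1 - e) := by positivity
    exact mul_le_mul_of_nonneg_right
      (mul_le_mul_of_nonneg_left hmU.le h3e) htail
  refine le_trans ?_ hfinal
  have htail : 0 ≤ tail μ X x := tail_nonneg μ X x
  have hCFnn : 0 ≤ C * tail μ X x := mul_nonneg hC.le htail
  have hcoef : 1 - ε ≤ (1 - e) * (1 - e) * (1 - e) * (1 - e) := by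
    have h20 : ε = 20 * e := by rw [hedef]; ring
    nlinarith [mul_nonneg he0.le he0.le, mul_nonneg (mul_nonneg he0.le he0.le) he0.le,
      mul_nonneg (mul_nonneg (mul_nonneg he0.le he0.le) he0.le) he0.le]
  calc (1 - ε) * (C * tail μ X x)
      ≤ ((1 - e) * (1 - e) * (1 - e) * (1 - e)) * (C * tail μ X x) :=
        mul_le_mul_of_nonneg_right hcoef hCFnn
    _ = (1 - e) * (1 - e) * (1 - e) * ((1 - e) * C) * tail μ X x := by ring


lemma pr_biUnion_le [IsFiniteMeasure μ] {n : ℕ} (B : ℕ → Set Ω) :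
    pr μ (⋃ k ∈ Finset.range n, B k) ≤ ∑ k ∈ Finset.range n, pr μ (B k) := by
  unfold pr
  refine le_trans (ENNReal.toReal_mono ?_ (measure_biUnion_finset_le _ _)) ?_
  · exact (ENNReal.sum_lt_top.mpr fun k _ => measure_lt_top μ _).ne
  · rw [ENNReal.toReal_sum (fun k _ => measure_ne_top μ _)]

set_option maxHeartbeats 2000000 in
lemma up_bound [IsProbabilityMeasure μ] (hXm : Measurable X) (hΘm : Measurable Θ)
    (hΘnn : ∀ ω, 0 ≤ Θ ω) (hF : ∀ x : ℝ, 0 ≤ x → 0 < tail μ X x)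
    {α ρ : ℝ} (hα : 0 < α) (hαρ : α < ρ) (hR : RegVar μ X α) (hA3 : A3' μ X Θ h)
    (hmom : Integrable (fun ω => Θ ω ^ ρ * h (Θ ω)) μ)
    (hC : 0 < ∫ ω, Θ ω ^ α * h (Θ ω) ∂μ)
    (hG : ∀ c > (0:ℝ),
      Tendsto (fun x => pr μ {ω | Θ ω > c * x} / tail μ (fun ω => Θ ω * X ω) x)
        atTop (nhds 0))
    {ε : ℝ} (hε : 0 < ε) (hε1 : ε ≤ 1) :
    ∀ᶠ x in atTop, tail μ (fun ω => Θ ω * X ω) x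
      ≤ (1 + ε) * ((∫ ω, Θ ω ^ α * h (Θ ω) ∂μ) * tail μ X x) := by
  have hρ0 : 0 < ρ := lt_trans hα hαρ
  have hint_h := integrable_h hΘm hΘnn hF hA3 hρ0 hmom.1
  have hint_α := integrable_pow hΘm hΘnn hF hA3 hρ0 hmom hα hαρ.le
  set C := ∫ ω, Θ ω ^ α * h (Θ ω) ∂μ with hCdef
  set e := ε/20 with hedef
  have he0 : 0 < e := by positivity
  have he1 : e ≤ 1/20 := by rw [hedef]; linarith
  obtain ⟨x0, hx01, hbound⟩ := key_estimate hXm hΘm hΘnn hF hA3 hint_h he0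
  obtain ⟨x1, hx11, hpotter⟩ := potter hF hα hαρ hR
  set x2 : ℝ := max x0 (2 * x1) with hx2def
  have hx21 : 1 ≤ x2 := le_trans hx01 (le_max_left _ _)
  have hx2pos : 0 < x2 := lt_of_lt_of_le zero_lt_one hx21
  set r : ℝ := (1 - e) ^ (-(1/α)) with hrdef
  have h1e : 0 < 1 - e := by linarith
  have h1e1 : 1 - e < 1 := by linarith
  have hr1 : 1 < r := by
    rw [hrdef]
    refine (Real.one_lt_rpow_iff_of_pos h1e).mpr (Or.inr ⟨h1e1, ?_⟩)
    rw [neg_lt, neg_zero]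
    positivity
  have hrpos : 0 < r := lt_trans zero_lt_one hr1
  have hrinv : r ^ (-α) = 1 - e := by
    rw [hrdef, ← Real.rpow_mul h1e.le, show -(1/α) * -α = 1 by field_simp, Real.rpow_one]
  have hrα : r ^ α * (1 - e) = 1 := by
    rw [← hrinv, ← Real.rpow_add hrpos, add_neg_cancel, Real.rpow_zero]
  have hrαpos : 0 < r ^ α := Real.rpow_pos_of_pos hrpos α
  have hRle : r ^ α ≤ 1 + 2 * e := by nlinarith
  -- choose m
  have hma : ∀ᶠ m : ℕ in atTop, 2 * (1 - e) ^ m < e * C := by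
    have := tendsto_pow_atTop_nhds_zero_of_lt_one h1e.le h1e1
    have h2 : Tendsto (fun m : ℕ => 2 * (1 - e) ^ m) atTop (𝓝 (2 * 0)) :=
      this.const_mul 2
    rw [mul_zero] at h2
    exact h2.eventually (eventually_lt_nhds (by positivity))
  have hmc : ∀ᶠ m : ℕ in atTop,
      (1 + e) * ((4:ℝ) ^ ρ * ∫ ω in {ω | Θ ω > r ^ (m:ℝ)}, Θ ω ^ ρ * h (Θ ω) ∂μ) < e * C := by
    have h4pos : (0:ℝ) < (4:ℝ) ^ ρ := Real.rpow_pos_of_pos (by norm_num) ρ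
    have htail := tendsto_setIntegral_gt hΘm hmom hr1
    have h2 : Tendsto (fun m : ℕ =>
        (1 + e) * ((4:ℝ) ^ ρ * ∫ ω in {ω | Θ ω > r ^ (m:ℝ)}, Θ ω ^ ρ * h (Θ ω) ∂μ))
        atTop (𝓝 ((1 + e) * ((4:ℝ) ^ ρ * 0))) := (htail.const_mul _).const_mul _
    rw [mul_zero, mul_zero] at h2
    exact h2.eventually (eventually_lt_nhds (by positivity))
  obtain ⟨m, hm_a, hm_c⟩ := (hma.and hmc).exists
  set n := 2 * m with hndef
  set t : ℕ → ℝ := fun k => r ^ ((k:ℝ) - (m:ℝ)) with htdef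
  have htpos : ∀ k, 0 < t k := fun k => Real.rpow_pos_of_pos hrpos _
  have htmono : Monotone t := fun j k hjk => by
    rw [htdef]
    exact Real.rpow_le_rpow_left_iff hr1 |>.mpr (by
      have : (j:ℝ) ≤ (k:ℝ) := by exact_mod_cast hjk
      linarith)
  have htsucc : ∀ k, t (k+1) = r * t k := fun k => by
    rw [htdef]
    push_cast
    rw [show ((k:ℝ) + 1 - m) = 1 + ((k:ℝ) - m) by ring, Real.rpow_add hrpos, Real.rpow_one]
  have ht0 : t 0 = r ^ (-(m:ℝ)) := by rw [htdef]; norm_num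
  have htn : t n = r ^ ((m:ℝ)) := by
    rw [htdef, hndef]
    push_cast
    ring_nf
  have ht0α : t 0 ^ α = (1 - e) ^ m := by
    rw [ht0, ← Real.rpow_mul hrpos.le, show -(m:ℝ) * α = -α * (m:ℝ) by ring,
      Real.rpow_mul hrpos.le, hrinv, Real.rpow_natCast]
  have htn1 : 1 ≤ t n := by
    rw [htn]
    exact Real.one_le_rpow hr1.le (Nat.cast_nonneg m)
  -- the tail moment set in terms of t n
  have hm_c' : (1 + e) * ((4:ℝ) ^ ρ * ∫ ω in {ω | Θ ω > t n}, Θ ω ^ ρ * h (Θ ω) ∂μ) < e * C := by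
    rw [htn]; exact hm_c
  -- eventual facts on x
  have hev1 : ∀ᶠ x in atTop, ∀ k ∈ Finset.range (n+1),
      tail μ X (x / t k) ≤ (1 + e) * t k ^ α * tail μ X x := by
    rw [eventually_all_finset]
    intro k _
    have hb : (0:ℝ) < 1 / t k := by positivity
    have heq : ((1:ℝ)/t k) ^ (-α) = t k ^ α := one_div_rpow_neg (htpos k) α
    have hlt : ((1:ℝ)/t k) ^ (-α) < (1 + e) * t k ^ α := by
      rw [heq]
      nlinarith [Real.rpow_pos_of_pos (htpos k) α]
    filter_upwards [(hR (1/t k) hb).eventually (eventually_le_nhds hlt),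
      eventually_ge_atTop (0:ℝ)] with x hx hx0
    have hFx : 0 < tail μ X x := hF x hx0
    have h2 := (div_le_iff₀ hFx).mp hx
    rwa [one_div_mul_eq_div] at h2
  have hev2 : ∀ᶠ x in atTop, tail μ X (x / t 0) ≤ 2 * t 0 ^ α * tail μ X x := by
    have hb : (0:ℝ) < 1 / t 0 := by positivity
    have heq : ((1:ℝ)/t 0) ^ (-α) = t 0 ^ α := one_div_rpow_neg (htpos 0) α
    have hlt : ((1:ℝ)/t 0) ^ (-α) < 2 * t 0 ^ α := by
      rw [heq]
      nlinarith [Real.rpow_pos_of_pos (htpos 0) α]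
    filter_upwards [(hR (1/t 0) hb).eventually (eventually_le_nhds hlt),
      eventually_ge_atTop (0:ℝ)] with x hx hx0
    have hFx : 0 < tail μ X x := hF x hx0
    have h2 := (div_le_iff₀ hFx).mp hx
    rwa [one_div_mul_eq_div] at h2
  have hevG : ∀ᶠ x in atTop,
      pr μ {ω | Θ ω > 1/x2 * x} ≤ e * tail μ (fun ω => Θ ω * X ω) x := by
    have hTpos := low_bound hXm hΘm hΘnn hF hα hαρ hR hA3 hmom hC
      (show (0:ℝ) < 1/2 by norm_num) (by norm_num)
    filter_upwards [hTpos, (hG (1/x2) (by positivity)).eventually (eventually_lt_nhds he0),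
      eventually_ge_atTop (0:ℝ)] with x hT hGx hx0
    have hFx : 0 < tail μ X x := hF x hx0
    have hTx : 0 < tail μ (fun ω => Θ ω * X ω) x :=
      lt_of_lt_of_le (by positivity) hT
    calc pr μ {ω | Θ ω > 1/x2 * x}
        = pr μ {ω | Θ ω > 1/x2 * x} / tail μ (fun ω => Θ ω * X ω) x
          * tail μ (fun ω => Θ ω * X ω) x := (div_mul_cancel₀ _ hTx.ne').symm
      _ ≤ e * tail μ (fun ω => Θ ω * X ω) x :=
          mul_le_mul_of_nonneg_right hGx.le hTx.le
  filter_upwards [hev1, hev2, hevG, eventually_ge_atTop (x0 * t n),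
    eventually_gt_atTop (x2 * t n), eventually_ge_atTop x2, eventually_gt_atTop (0:ℝ)]
    with x h1 h2 hGx hxx0 hxx2tn hxx2 hxpos
  have hFx : 0 < tail μ X x := hF x hxpos.le
  set T := tail μ (fun ω => Θ ω * X ω) x with hTdef
  set E : Set Ω := {ω | Θ ω * X ω > x} with hEdef
  have hEmeas : MeasurableSet E := measurableSet_lt measurable_const (hΘm.mul hXm)
  have hΘposE : ∀ ω ∈ E, 0 < Θ ω := by
    intro ω hω
    rcases eq_or_lt_of_le (hΘnn ω) with h0 | h0
    · exfalso
      have : Θ ω * X ω > x := hω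
      rw [← h0, zero_mul] at this
      linarith
    · exact h0
  have hXposE : ∀ ω ∈ E, 0 < X ω := by
    intro ω hω
    have hθ := hΘposE ω hω
    have : Θ ω * X ω > x := hω
    nlinarith
  -- ordering of cut points
  have htn_lt : t n < x / x2 := by
    rw [lt_div_iff₀ hx2pos]
    nlinarith
  have ht0n : t 0 ≤ t n := htmono (Nat.zero_le n)
  -- region decomposition
  have hdecomp : E ⊆ (E ∩ Θ ⁻¹' (Ioc 0 (t 0))) ∪ (E ∩ Θ ⁻¹' (Ioc (t 0) (t n)))
      ∪ (E ∩ Θ ⁻¹' (Ioc (t n) (x / x2))) ∪ (E ∩ Θ ⁻¹' (Ioi (x / x2))) := by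
    intro ω hω
    have hθ := hΘposE ω hω
    rcases le_or_gt (Θ ω) (t 0) with hc1 | hc1
    · exact Or.inl (Or.inl (Or.inl ⟨hω, hθ, hc1⟩))
    rcases le_or_gt (Θ ω) (t n) with hc2 | hc2
    · exact Or.inl (Or.inl (Or.inr ⟨hω, hc1, hc2⟩))
    rcases le_or_gt (Θ ω) (x / x2) with hc3 | hc3
    · exact Or.inl (Or.inr ⟨hω, hc2, hc3⟩)
    · exact Or.inr ⟨hω, hc3⟩
  have hsplit : T ≤ pr μ (E ∩ Θ ⁻¹' (Ioc 0 (t 0))) + pr μ (E ∩ Θ ⁻¹' (Ioc (t 0) (t n)))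
      + pr μ (E ∩ Θ ⁻¹' (Ioc (t n) (x / x2))) + pr μ (E ∩ Θ ⁻¹' (Ioi (x / x2))) := by
    refine le_trans (pr_mono hdecomp) ?_
    refine le_trans (pr_union_le _ _) ?_
    gcongr
    refine le_trans (pr_union_le _ _) ?_
    gcongr
    exact pr_union_le _ _
  -- Region 1 : small Θ
  have hS1 : pr μ (E ∩ Θ ⁻¹' (Ioc 0 (t 0))) ≤ e * C * tail μ X x := by
    have hincl : E ∩ Θ ⁻¹' (Ioc 0 (t 0)) ⊆ {ω | X ω > x / t 0} := by
      rintro ω ⟨hω, hΘS⟩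
      simp only [mem_preimage, mem_Ioc] at hΘS
      have hXpos := hXposE ω hω
      have hE' : Θ ω * X ω > x := hω
      have ht0Xle : Θ ω * X ω ≤ t 0 * X ω := by nlinarith
      show x / t 0 < X ω
      rw [div_lt_iff₀ (htpos 0)]
      nlinarith
    calc pr μ (E ∩ Θ ⁻¹' (Ioc 0 (t 0))) ≤ tail μ X (x / t 0) := pr_mono hincl
      _ ≤ 2 * t 0 ^ α * tail μ X x := h2
      _ = 2 * (1 - e) ^ m * tail μ X x := by rw [ht0α]
      _ ≤ e * C * tail μ X x := by
          have := mul_le_mul_of_nonneg_right hm_a.le hFx.le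
          nlinarith [this]
  -- Region 2 : middle
  have hAnn : ∀ S : Set ℝ, MeasurableSet S → 0 ≤ ∫ ω in Θ ⁻¹' S, h (Θ ω) ∂μ := fun S hS =>
    setIntegral_nonneg (hΘm hS) (fun ω _ => (hA3.1 _ (hΘnn ω)).le)
  have hcell : ∀ k ∈ Finset.range n,
      pr μ (E ∩ Θ ⁻¹' (Ioc (t k) (t (k+1))))
        ≤ (1 + e) * (1 + e) * r ^ α
          * (∫ ω in Θ ⁻¹' (Ioc (t k) (t (k+1))), Θ ω ^ α * h (Θ ω) ∂μ) * tail μ X x := by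
    intro k hk
    have hk1 : k + 1 ∈ Finset.range (n+1) := by
      simp only [Finset.mem_range] at hk ⊢
      omega
    have hxk : x0 ≤ x / t (k+1) := by
      rw [le_div_iff₀ (htpos (k+1))]
      have hkn : t (k+1) ≤ t n := htmono (by
        simp only [Finset.mem_range] at hk
        omega)
      have hx0pos : (0:ℝ) < x0 := lt_of_lt_of_le zero_lt_one hx01
      have := mul_le_mul_of_nonneg_left hkn hx0pos.le
      linarith
    have hincl : E ∩ Θ ⁻¹' (Ioc (t k) (t (k+1)))
        ⊆ {ω | X ω > x / t (k+1)} ∩ Θ ⁻¹' (Ioc (t k) (t (k+1))) := by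
      rintro ω ⟨hω, hΘS⟩
      refine ⟨?_, hΘS⟩
      simp only [mem_preimage, mem_Ioc] at hΘS
      have hXpos := hXposE ω hω
      have hE' : Θ ω * X ω > x := hω
      show x / t (k+1) < X ω
      rw [div_lt_iff₀ (htpos (k+1))]
      have := mul_le_mul_of_nonneg_right hΘS.2 hXpos.le
      linarith
    have hkey := (hbound (x / t (k+1)) hxk (Ioc (t k) (t (k+1))) measurableSet_Ioc).2
    have hreg := h1 (k+1) hk1
    have hstep1 : t (k+1) ^ α * (∫ ω in Θ ⁻¹' (Ioc (t k) (t (k+1))), h (Θ ω) ∂μ)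
        ≤ r ^ α * ∫ ω in Θ ⁻¹' (Ioc (t k) (t (k+1))), Θ ω ^ α * h (Θ ω) ∂μ := by
      rw [← MeasureTheory.integral_const_mul, ← MeasureTheory.integral_const_mul]
      refine setIntegral_mono_on ((hint_h.const_mul _).integrableOn)
        ((hint_α.const_mul _).integrableOn) (hΘm measurableSet_Ioc) ?_
      intro ω hω
      simp only [mem_preimage, mem_Ioc] at hω
      have hθpos : 0 < Θ ω := lt_trans (htpos k) hω.1
      have hh : 0 ≤ h (Θ ω) := (hA3.1 _ (hΘnn ω)).le
      have hθle : t (k+1) ^ α ≤ (r * Θ ω) ^ α := by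
        refine Real.rpow_le_rpow (htpos (k+1)).le ?_ hα.le
        rw [htsucc k]
        have := mul_le_mul_of_nonneg_left hω.1.le hrpos.le
        linarith
      rw [Real.mul_rpow hrpos.le hθpos.le] at hθle
      calc t (k+1) ^ α * h (Θ ω)
          ≤ r ^ α * Θ ω ^ α * h (Θ ω) := mul_le_mul_of_nonneg_right hθle hh
        _ = r ^ α * (Θ ω ^ α * h (Θ ω)) := by ring
    have hAknn : 0 ≤ ∫ ω in Θ ⁻¹' (Ioc (t k) (t (k+1))), h (Θ ω) ∂μ :=
      hAnn _ measurableSet_Ioc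
    calc pr μ (E ∩ Θ ⁻¹' (Ioc (t k) (t (k+1))))
        ≤ pr μ ({ω | X ω > x / t (k+1)} ∩ Θ ⁻¹' (Ioc (t k) (t (k+1)))) := pr_mono hincl
      _ ≤ (1 + e) * ((∫ ω in Θ ⁻¹' (Ioc (t k) (t (k+1))), h (Θ ω) ∂μ)
            * tail μ X (x / t (k+1))) := hkey
      _ ≤ (1 + e) * ((∫ ω in Θ ⁻¹' (Ioc (t k) (t (k+1))), h (Θ ω) ∂μ)
            * ((1 + e) * t (k+1) ^ α * tail μ X x)) := by
          have := mul_le_mul_of_nonneg_left hreg hAknn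
          exact mul_le_mul_of_nonneg_left this (by linarith)
      _ = (1 + e) * (1 + e)
            * (t (k+1) ^ α * (∫ ω in Θ ⁻¹' (Ioc (t k) (t (k+1))), h (Θ ω) ∂μ))
            * tail μ X x := by ring
      _ ≤ (1 + e) * (1 + e)
            * (r ^ α * ∫ ω in Θ ⁻¹' (Ioc (t k) (t (k+1))), Θ ω ^ α * h (Θ ω) ∂μ)
            * tail μ X x := by
          have h2' := mul_le_mul_of_nonneg_left hstep1
            (show (0:ℝ) ≤ (1+e)*(1+e) by positivity)
          exact mul_le_mul_of_nonneg_right h2' hFx.le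
      _ = (1 + e) * (1 + e) * r ^ α
            * (∫ ω in Θ ⁻¹' (Ioc (t k) (t (k+1))), Θ ω ^ α * h (Θ ω) ∂μ) * tail μ X x := by
          ring
  have hS2 : pr μ (E ∩ Θ ⁻¹' (Ioc (t 0) (t n)))
      ≤ ((1 + e) * (1 + e) * (1 + 2*e)) * (C * tail μ X x) := by
    have hU : E ∩ Θ ⁻¹' (Ioc (t 0) (t n))
        = ⋃ k ∈ Finset.range n, (E ∩ Θ ⁻¹' (Ioc (t k) (t (k+1)))) := by
      rw [← biUnion_Ioc_of_monotone htmono n]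
      simp [preimage_iUnion, inter_iUnion]
    rw [hU, pr_biUnion (fun k => hEmeas.inter (hΘm measurableSet_Ioc))
      (fun j k hjk => ((pairwise_disjoint_Ioc_of_monotone htmono j k hjk).preimage Θ).mono
        inf_le_right inf_le_right)]
    refine le_trans (Finset.sum_le_sum hcell) ?_
    rw [← Finset.sum_mul, ← Finset.mul_sum]
    have hIsum : ∑ k ∈ Finset.range n,
        ∫ ω in Θ ⁻¹' (Ioc (t k) (t (k+1))), Θ ω ^ α * h (Θ ω) ∂μ ≤ C := by
      have heqU : ∑ k ∈ Finset.range n,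
          ∫ ω in Θ ⁻¹' (Ioc (t k) (t (k+1))), Θ ω ^ α * h (Θ ω) ∂μ
          = ∫ ω in Θ ⁻¹' (Ioc (t 0) (t n)), Θ ω ^ α * h (Θ ω) ∂μ := by
        rw [← biUnion_Ioc_of_monotone htmono n,
          show Θ ⁻¹' (⋃ k ∈ Finset.range n, Ioc (t k) (t (k+1)))
            = ⋃ k ∈ Finset.range n, Θ ⁻¹' (Ioc (t k) (t (k+1))) by simp [preimage_iUnion],
          integral_biUnion_finset (Finset.range n) (fun k _ => hΘm measurableSet_Ioc)
            (fun j _ k _ hjk => (pairwise_disjoint_Ioc_of_monotone htmono j k hjk).preimage Θ)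
            (fun k _ => hint_α.integrableOn)]
      rw [heqU, hCdef]
      exact setIntegral_le_integral hint_α (Eventually.of_forall fun ω =>
        mul_nonneg (Real.rpow_nonneg (hΘnn ω) α) (hA3.1 _ (hΘnn ω)).le)
    have hc1 : (1 + e) * (1 + e) * r ^ α
        * (∑ k ∈ Finset.range n, ∫ ω in Θ ⁻¹' (Ioc (t k) (t (k+1))), Θ ω ^ α * h (Θ ω) ∂μ)
        ≤ (1 + e) * (1 + e) * (1 + 2*e) * C := by
      have hsumnn : 0 ≤ ∑ k ∈ Finset.range n,
          ∫ ω in Θ ⁻¹' (Ioc (t k) (t (k+1))), Θ ω ^ α * h (Θ ω) ∂μ :=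
        Finset.sum_nonneg fun k _ => setIntegral_nonneg (hΘm measurableSet_Ioc) fun ω _ =>
          mul_nonneg (Real.rpow_nonneg (hΘnn ω) α) (hA3.1 _ (hΘnn ω)).le
      have hA' : (1+e)*(1+e)*r^α ≤ (1+e)*(1+e)*(1+2*e) :=
        mul_le_mul_of_nonneg_left hRle (by positivity)
      have hB' := mul_le_mul_of_nonneg_right hA' hsumnn
      have hc2nn : (0:ℝ) ≤ (1+e)*(1+e)*(1+2*e) := by positivity
      have hC' := mul_le_mul_of_nonneg_left hIsum hc2nn
      linarith
    calc (1 + e) * (1 + e) * r ^ α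
        * (∑ k ∈ Finset.range n, ∫ ω in Θ ⁻¹' (Ioc (t k) (t (k+1))), Θ ω ^ α * h (Θ ω) ∂μ)
        * tail μ X x
        ≤ ((1 + e) * (1 + e) * (1 + 2*e) * C) * tail μ X x :=
          mul_le_mul_of_nonneg_right hc1 hFx.le
      _ = ((1 + e) * (1 + e) * (1 + 2*e)) * (C * tail μ X x) := by ring
  -- Region 3 : mid-large
  set J : ℕ := Nat.ceil (x / x2) + 1 with hJ
  set u : ℕ → ℝ := fun j => t n * 2 ^ j with hu
  have hupos : ∀ i, 0 < u i := fun i => mul_pos (htpos n) (pow_pos two_pos i)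
  have humono : Monotone u := fun a b hab => by
    have h2ab : (2:ℝ) ^ a ≤ 2 ^ b := pow_le_pow_right₀ one_le_two hab
    have := mul_le_mul_of_nonneg_left h2ab (htpos n).le
    simpa [hu] using this
  set V : ℕ → Set ℝ := fun j => Ioc (u j) (min (u (j+1)) (x / x2)) with hV
  have hVsub : ∀ j, V j ⊆ Ioc (u j) (u (j+1)) := fun j =>
    Ioc_subset_Ioc_right (min_le_left _ _)
  have hVdisj : ∀ i j, i ≠ j → Disjoint (V i) (V j) := fun i j hij =>
    ((pairwise_disjoint_Ioc_of_monotone humono i j hij).mono (hVsub i) (hVsub j))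
  have hcover : Ioc (t n) (x / x2) ⊆ ⋃ j ∈ Finset.range J, V j := by
    intro θ hθ
    have hu0 : u 0 = t n := by simp [hu]
    have hθ2 : θ ∈ Ioc (u 0) (u J) := by
      constructor
      · rw [hu0]; exact hθ.1
      · have h2J : (J:ℝ) < 2 ^ J := by exact_mod_cast Nat.lt_two_pow_self (n := J)
        have hceil : x / x2 ≤ (J:ℝ) := by
          rw [hJ]
          push_cast
          linarith [Nat.le_ceil (x / x2)]
        have hM1 : 1 ≤ t n := htn1
        have h2Jpos : (0:ℝ) < 2 ^ J := pow_pos two_pos J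
        calc θ ≤ x / x2 := hθ.2
          _ ≤ (J:ℝ) := hceil
          _ ≤ 2 ^ J := by linarith
          _ ≤ t n * 2 ^ J := by nlinarith
    rw [← biUnion_Ioc_of_monotone humono J] at hθ2
    simp only [mem_iUnion, exists_prop] at hθ2 ⊢
    obtain ⟨j, hjJ, hjmem⟩ := hθ2
    exact ⟨j, hjJ, hjmem.1, le_min hjmem.2 hθ.2⟩
  have hcell3 : ∀ j ∈ Finset.range J,
      pr μ (E ∩ Θ ⁻¹' (V j)) ≤ (1 + e) * ((4:ℝ) ^ ρ
        * ∫ ω in Θ ⁻¹' (V j), Θ ω ^ ρ * h (Θ ω) ∂μ) * tail μ X x := by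
    intro j _
    set s : ℝ := min (u (j+1)) (x / x2) with hs
    have hs1 : 1 ≤ s := by
      refine le_min ?_ ?_
      · have h2j : (1:ℝ) ≤ 2 ^ (j+1) := one_le_pow₀ one_le_two
        have := htn1
        show (1:ℝ) ≤ t n * 2 ^ (j+1)
        nlinarith
      · rw [le_div_iff₀ hx2pos]
        linarith [hxx2]
    have hspos : 0 < s := lt_of_lt_of_le zero_lt_one hs1
    have hsle : s ≤ x / x2 := min_le_right _ _
    have hxs : x0 ≤ x / s := by
      have hxs2 : x2 ≤ x / s := by
        rw [le_div_iff₀ hspos]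
        calc x2 * s ≤ x2 * (x / x2) := mul_le_mul_of_nonneg_left hsle hx2pos.le
          _ = x := by field_simp
      exact le_trans (le_max_left _ _) hxs2
    have hincl : E ∩ Θ ⁻¹' (V j) ⊆ {ω | X ω > x / s} ∩ Θ ⁻¹' (V j) := by
      rintro ω ⟨hω, hΘS⟩
      refine ⟨?_, hΘS⟩
      have hmem : Θ ω ∈ Ioc (u j) s := hΘS
      have hXpos := hXposE ω hω
      have hE' : Θ ω * X ω > x := hω
      show x / s < X ω
      rw [div_lt_iff₀ hspos]
      have := mul_le_mul_of_nonneg_right hmem.2 hXpos.le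
      linarith
    have hkey := (hbound (x / s) hxs (V j) measurableSet_Ioc).2
    have hpot : tail μ X (x / s) ≤ (2 * s) ^ ρ * tail μ X x := by
      refine hpotter x s hs1 ?_
      have hx12 : x1 ≤ x2 / 2 := by
        have := le_max_right x0 (2 * x1)
        rw [← hx2def] at this
        linarith
      have hmul : x1 * s ≤ (x2/2) * (x / x2) := by
        refine mul_le_mul hx12 hsle hspos.le (by positivity)
      have heqhalf : (x2/2) * (x / x2) = x / 2 := by
        field_simp
      rw [heqhalf] at hmul
      linarith
    have hstep3 : (2 * s) ^ ρ * (∫ ω in Θ ⁻¹' (V j), h (Θ ω) ∂μ)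
        ≤ (4:ℝ) ^ ρ * ∫ ω in Θ ⁻¹' (V j), Θ ω ^ ρ * h (Θ ω) ∂μ := by
      rw [← MeasureTheory.integral_const_mul, ← MeasureTheory.integral_const_mul]
      refine setIntegral_mono_on ((hint_h.const_mul _).integrableOn)
        ((hmom.const_mul _).integrableOn) (hΘm measurableSet_Ioc) ?_
      intro ω hω
      simp only [mem_preimage] at hω
      have hmem : Θ ω ∈ Ioc (u j) s := hω
      have hθpos : 0 < Θ ω := lt_trans (hupos j) hmem.1
      have hh : 0 ≤ h (Θ ω) := (hA3.1 _ (hΘnn ω)).le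
      have h2s : 2 * s ≤ 4 * Θ ω := by
        have hs2 : s ≤ u (j+1) := min_le_left _ _
        have huj : u (j+1) = 2 * u j := by
          show t n * 2 ^ (j+1) = 2 * (t n * 2 ^ j)
          ring
        linarith [hmem.1]
      have hle : (2*s) ^ ρ ≤ (4 * Θ ω) ^ ρ :=
        Real.rpow_le_rpow (by positivity) h2s hρ0.le
      rw [Real.mul_rpow (by norm_num : (0:ℝ) ≤ 4) hθpos.le] at hle
      calc (2*s) ^ ρ * h (Θ ω)
          ≤ (4:ℝ) ^ ρ * Θ ω ^ ρ * h (Θ ω) := mul_le_mul_of_nonneg_right hle hh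
        _ = (4:ℝ) ^ ρ * (Θ ω ^ ρ * h (Θ ω)) := by ring
    have hAnnj : 0 ≤ ∫ ω in Θ ⁻¹' (V j), h (Θ ω) ∂μ := hAnn _ measurableSet_Ioc
    calc pr μ (E ∩ Θ ⁻¹' (V j))
        ≤ pr μ ({ω | X ω > x / s} ∩ Θ ⁻¹' (V j)) := pr_mono hincl
      _ ≤ (1 + e) * ((∫ ω in Θ ⁻¹' (V j), h (Θ ω) ∂μ) * tail μ X (x / s)) := hkey
      _ ≤ (1 + e) * ((∫ ω in Θ ⁻¹' (V j), h (Θ ω) ∂μ) * ((2*s) ^ ρ * tail μ X x)) := by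
          have := mul_le_mul_of_nonneg_left hpot hAnnj
          exact mul_le_mul_of_nonneg_left this (by linarith)
      _ = (1 + e) * ((2*s) ^ ρ * (∫ ω in Θ ⁻¹' (V j), h (Θ ω) ∂μ)) * tail μ X x := by ring
      _ ≤ (1 + e) * ((4:ℝ) ^ ρ * ∫ ω in Θ ⁻¹' (V j), Θ ω ^ ρ * h (Θ ω) ∂μ) * tail μ X x := by
          have := mul_le_mul_of_nonneg_left hstep3 (show (0:ℝ) ≤ 1 + e by linarith)
          exact mul_le_mul_of_nonneg_right this hFx.le
  have hS3 : pr μ (E ∩ Θ ⁻¹' (Ioc (t n) (x / x2))) ≤ e * (C * tail μ X x) := by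
    have hsub2 : E ∩ Θ ⁻¹' (Ioc (t n) (x / x2)) ⊆ ⋃ j ∈ Finset.range J, (E ∩ Θ ⁻¹' (V j)) := by
      rintro ω ⟨hω1, hω2⟩
      have := hcover hω2
      simp only [mem_iUnion, exists_prop] at this ⊢
      obtain ⟨j, hj1, hj2⟩ := this
      exact ⟨j, hj1, hω1, hj2⟩
    refine le_trans (pr_mono hsub2) (le_trans (pr_biUnion_le _) ?_)
    refine le_trans (Finset.sum_le_sum hcell3) ?_
    rw [← Finset.sum_mul, ← Finset.mul_sum, ← Finset.mul_sum]
    have hsumI : ∑ j ∈ Finset.range J, ∫ ω in Θ ⁻¹' (V j), Θ ω ^ ρ * h (Θ ω) ∂μ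
        ≤ ∫ ω in {ω | Θ ω > t n}, Θ ω ^ ρ * h (Θ ω) ∂μ := by
      have hUeq : ∑ j ∈ Finset.range J, ∫ ω in Θ ⁻¹' (V j), Θ ω ^ ρ * h (Θ ω) ∂μ
          = ∫ ω in ⋃ j ∈ Finset.range J, Θ ⁻¹' (V j), Θ ω ^ ρ * h (Θ ω) ∂μ :=
        (integral_biUnion_finset (Finset.range J) (fun j _ => hΘm measurableSet_Ioc)
          (fun i _ j _ hij => (hVdisj i j hij).preimage Θ) (fun j _ => hmom.integrableOn)).symm
      rw [hUeq]
      refine setIntegral_mono_set hmom.integrableOn ?_ ?_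
      · exact Eventually.of_forall fun ω =>
          mul_nonneg (Real.rpow_nonneg (hΘnn ω) ρ) (hA3.1 _ (hΘnn ω)).le
      · refine HasSubset.Subset.eventuallyLE ?_
        intro ω hω
        simp only [mem_iUnion, exists_prop] at hω
        obtain ⟨j, _, hj2⟩ := hω
        have hmem : Θ ω ∈ Ioc (u j) (min (u (j+1)) (x / x2)) := hj2
        have h2j : (1:ℝ) ≤ 2 ^ j := one_le_pow₀ one_le_two
        have : t n ≤ u j := by
          show t n ≤ t n * 2 ^ j
          nlinarith [htpos n]
        show Θ ω > t n
        exact lt_of_le_of_lt this hmem.1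
    have hintnn : 0 ≤ ∫ ω in {ω | Θ ω > t n}, Θ ω ^ ρ * h (Θ ω) ∂μ :=
      setIntegral_nonneg (measurableSet_lt measurable_const hΘm) fun ω _ =>
        mul_nonneg (Real.rpow_nonneg (hΘnn ω) ρ) (hA3.1 _ (hΘnn ω)).le
    have h4pos : (0:ℝ) < (4:ℝ) ^ ρ := Real.rpow_pos_of_pos (by norm_num) ρ
    have hch : (1 + e) * ((4:ℝ) ^ ρ
        * ∑ j ∈ Finset.range J, ∫ ω in Θ ⁻¹' (V j), Θ ω ^ ρ * h (Θ ω) ∂μ) * tail μ X x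
        ≤ (1 + e) * ((4:ℝ) ^ ρ
          * ∫ ω in {ω | Θ ω > t n}, Θ ω ^ ρ * h (Θ ω) ∂μ) * tail μ X x := by
      have h1' : (1 + e) * ((4:ℝ) ^ ρ
          * ∑ j ∈ Finset.range J, ∫ ω in Θ ⁻¹' (V j), Θ ω ^ ρ * h (Θ ω) ∂μ)
          ≤ (1 + e) * ((4:ℝ) ^ ρ * ∫ ω in {ω | Θ ω > t n}, Θ ω ^ ρ * h (Θ ω) ∂μ) := by
        have := mul_le_mul_of_nonneg_left hsumI h4pos.le
        exact mul_le_mul_of_nonneg_left this (by linarith)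
      exact mul_le_mul_of_nonneg_right h1' hFx.le
    refine le_trans hch ?_
    calc (1 + e) * ((4:ℝ) ^ ρ * ∫ ω in {ω | Θ ω > t n}, Θ ω ^ ρ * h (Θ ω) ∂μ) * tail μ X x
        ≤ (e * C) * tail μ X x := mul_le_mul_of_nonneg_right hm_c'.le hFx.le
      _ = e * (C * tail μ X x) := by ring
  -- Region 4 : very large
  have hS4 : pr μ (E ∩ Θ ⁻¹' (Ioi (x / x2))) ≤ e * T := by
    refine le_trans (pr_mono ?_) hGx
    rintro ω ⟨_, hΘS⟩
    simp only [mem_preimage, mem_Ioi] at hΘS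
    show Θ ω > 1/x2 * x
    rwa [one_div_mul_eq_div]
  -- combine
  have hS1' : pr μ (E ∩ Θ ⁻¹' (Ioc 0 (t 0))) ≤ e * (C * tail μ X x) := by
    calc pr μ (E ∩ Θ ⁻¹' (Ioc 0 (t 0))) ≤ e * C * tail μ X x := hS1
      _ = e * (C * tail μ X x) := by ring
  have hCF : 0 ≤ C * tail μ X x := mul_nonneg hC.le hFx.le
  have hTtot : (1 - e) * T ≤ (2*e + (1+e)*(1+e)*(1+2*e)) * (C * tail μ X x) := by
    have hexp : (2*e + (1+e)*(1+e)*(1+2*e)) * (C * tail μ X x)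
        = e * (C * tail μ X x) + ((1+e)*(1+e)*(1+2*e)) * (C * tail μ X x)
          + e * (C * tail μ X x) := by ring
    have hlin : (1 - e) * T = T - e * T := by ring
    rw [hexp, hlin]
    linarith [hsplit, hS1', hS2, hS3, hS4]
  have hco : 2*e + (1+e)*(1+e)*(1+2*e) ≤ (1 + 20*e) * (1 - e) := by nlinarith
  have hT2 : (1 - e) * T ≤ (1 - e) * ((1 + 20*e) * (C * tail μ X x)) := by
    calc (1 - e) * T ≤ (2*e + (1+e)*(1+e)*(1+2*e)) * (C * tail μ X x) := hTtot
      _ ≤ ((1 + 20*e) * (1 - e)) * (C * tail μ X x) := mul_le_mul_of_nonneg_right hco hCF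
      _ = (1 - e) * ((1 + 20*e) * (C * tail μ X x)) := by ring
  have hT3 : T ≤ (1 + 20*e) * (C * tail μ X x) := (mul_le_mul_iff_right₀ h1e).mp hT2
  have h20 : ε = 20 * e := by rw [hedef]; ring
  rw [h20]
  calc T ≤ (1 + 20*e) * (C * tail μ X x) := hT3
    _ = (1 + 20 * e) * (C * tail μ X x) := by ring

end BreimanAux6

set_option maxHeartbeats 1000000 in
/-- Breiman's lemma under dependence: if `F ∈ ℛ₋α`, Assumption A3' holds,
`Ḡ(cx) = o(P[ΘX > x])` for every `c > 0` and `E[Θ^ρ h(Θ)] < ∞` for some `ρ > α`, then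
`P[ΘX > x] ~ E[Θ^α h(Θ)] F̄(x)` and the distribution of `ΘX` belongs to `ℛ₋α`. -/
theorem statement_10
    (μ : Measure Ω) [IsProbabilityMeasure μ]
    (X Θ : Ω → ℝ) (α : ℝ) (hα : 0 < α)
    (hXm : Measurable X) (hΘm : Measurable Θ)
    (hF : ∀ x : ℝ, 0 ≤ x → 0 < tail μ X x)
    (hR : RegVar μ X α)
    (hΘnn : ∀ ω, 0 ≤ Θ ω) (hΘnd : NonDegAtZero μ Θ)
    (h : ℝ → ℝ) (hA3 : A3' μ X Θ h)
    (hG : ∀ c > (0:ℝ),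
      Tendsto (fun x => pr μ {ω | Θ ω > c * x} / tail μ (fun ω => Θ ω * X ω) x)
        atTop (nhds 0))
    (ρ : ℝ) (hρ : α < ρ)
    (hmom : Integrable (fun ω => Θ ω ^ ρ * h (Θ ω)) μ) :
    Tendsto (fun x => tail μ (fun ω => Θ ω * X ω) x /
        ((∫ ω, Θ ω ^ α * h (Θ ω) ∂μ) * tail μ X x)) atTop (nhds 1) ∧
      RegVar μ (fun ω => Θ ω * X ω) α := by
  have hρ0 : 0 < ρ := lt_trans hα hρ
  have hint_α : Integrable (fun ω => Θ ω ^ α * h (Θ ω)) μ :=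
    integrable_pow hΘm hΘnn hF hA3 hρ0 hmom hα hρ.le
  have hC : 0 < ∫ ω, Θ ω ^ α * h (Θ ω) ∂μ := by
    refine (integral_pos_iff_support_of_nonneg_ae (Eventually.of_forall fun ω =>
      mul_nonneg (Real.rpow_nonneg (hΘnn ω) α) (hA3.1 _ (hΘnn ω)).le) hint_α).mpr ?_
    refine lt_of_lt_of_le hΘnd (measure_mono ?_)
    intro ω hω
    have hθpos : 0 < Θ ω := lt_of_le_of_ne (hΘnn ω) (Ne.symm hω)
    have hppos : 0 < Θ ω ^ α * h (Θ ω) :=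
      mul_pos (Real.rpow_pos_of_pos hθpos α) (hA3.1 _ (hΘnn ω))
    exact Function.mem_support.mpr (ne_of_gt hppos)
  set C := ∫ ω, Θ ω ^ α * h (Θ ω) ∂μ with hCdef
  have part1 : Tendsto (fun x => tail μ (fun ω => Θ ω * X ω) x / (C * tail μ X x))
      atTop (𝓝 1) := by
    rw [Metric.tendsto_atTop]
    intro δ hδ
    set ε := min (δ/2) (1/2) with hεdef
    have hε0 : 0 < ε := lt_min (by linarith) (by norm_num)
    have hε1 : ε ≤ 1 := le_trans (min_le_right _ _) (by norm_num)
    have hlow := low_bound hXm hΘm hΘnn hF hα hρ hR hA3 hmom hC hε0 hε1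
    have hup := up_bound hXm hΘm hΘnn hF hα hρ hR hA3 hmom hC hG hε0 hε1
    obtain ⟨N, hN⟩ := eventually_atTop.mp ((hlow.and hup).and (eventually_ge_atTop (0:ℝ)))
    refine ⟨N, fun x hx => ?_⟩
    obtain ⟨⟨hl, hu⟩, hx0⟩ := hN x hx
    have hFx : 0 < tail μ X x := hF x hx0
    have hCF : 0 < C * tail μ X x := mul_pos hC hFx
    have hεδ : ε < δ := lt_of_le_of_lt (min_le_left _ _) (by linarith)
    rw [Real.dist_eq, abs_lt]
    constructor
    · have hlow2 : 1 - ε ≤ tail μ (fun ω => Θ ω * X ω) x / (C * tail μ X x) := by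
        rw [le_div_iff₀ hCF]
        linarith [hl]
      linarith
    · have hup2 : tail μ (fun ω => Θ ω * X ω) x / (C * tail μ X x) ≤ 1 + ε := by
        rw [div_le_iff₀ hCF]
        linarith [hu]
      linarith
  refine ⟨part1, ?_⟩
  intro b hb
  have hTpos : ∀ᶠ x in atTop, 0 < tail μ (fun ω => Θ ω * X ω) x := by
    filter_upwards [low_bound hXm hΘm hΘnn hF hα hρ hR hA3 hmom hC
      (show (0:ℝ) < 1/2 by norm_num) (by norm_num), eventually_ge_atTop (0:ℝ)] with x h1 hx0
    have hFx := hF x hx0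
    refine lt_of_lt_of_le ?_ h1
    have : (0:ℝ) < (1 - 1/2) * (C * tail μ X x) := by
      have := mul_pos hC hFx
      nlinarith
    exact this
  have hmul : Tendsto (fun x : ℝ => b * x) atTop atTop :=
    Tendsto.const_mul_atTop hb tendsto_id
  have hA : Tendsto (fun x => tail μ (fun ω => Θ ω * X ω) (b*x) / (C * tail μ X (b*x)))
      atTop (𝓝 1) := part1.comp hmul
  have hD : Tendsto (fun x => (C * tail μ X x) / tail μ (fun ω => Θ ω * X ω) x)
      atTop (𝓝 1) := by
    have hinv := part1.inv₀ one_ne_zero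
    rw [inv_one] at hinv
    refine hinv.congr fun x => ?_
    rw [inv_div]
  have hB : Tendsto (fun x => tail μ X (b*x) / tail μ X x) atTop (𝓝 (b ^ (-α))) := hR b hb
  have hprod := (hA.mul hB).mul hD
  rw [one_mul, mul_one] at hprod
  refine Tendsto.congr' ?_ hprod
  filter_upwards [hTpos, hmul.eventually hTpos, eventually_ge_atTop (0:ℝ),
    hmul.eventually (eventually_ge_atTop (0:ℝ))] with x hT hTb hx0 hbx0
  have hFx := (hF x hx0).ne'
  have hFbx := (hF (b*x) hbx0).ne'
  field_simp

end RWS
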